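/- arXiv:1810.05249 — 5 statements merged into one kernel-verified Lean document; each statement's English description precedes it below -/
import Mathlib

section
/- Let p be an odd prime and let a, b be nonzero squarefree integers with v_p(a) ≤ v_p(b), where v_p denotes the p-adic valuation. Then the quaternion algebra ℍ[ℚ_p, a, b] over the p-adic numbers is a division ring (every nonzero element is invertible) if and only if either (i) p ∤ a, p ∣ b, and the image of a in ℤ/pℤ is not a square, or (ii) p ∣ a, p ∣ b, and, writing a = p·a₀ and b = p·b₀, the image of −a₀⁻¹·b₀ in ℤ/pℤ is not a square. -/
open Quaternion

section Aux

/-- Criterion: the quaternion algebra over a field is "division" iff its norm form is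
anisotropic. -/
theorem QPA.div_iff (F : Type*) [Field F] (c₁ c₂ : F) :
    (∀ x : ℍ[F, c₁, c₂], x ≠ 0 → IsUnit x) ↔
      ∀ x₁ x₂ x₃ x₄ : F, x₁^2 - c₁*x₂^2 - c₂*x₃^2 + c₁*c₂*x₄^2 = 0 →
        x₁ = 0 ∧ x₂ = 0 ∧ x₃ = 0 ∧ x₄ = 0 := by
  have key : ∀ x : ℍ[F, c₁, c₂],
      x * star x = ((x.1^2 - c₁*x.2^2 - c₂*x.3^2 + c₁*c₂*x.4^2 : F) : ℍ[F, c₁, c₂]) ∧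
      star x * x = ((x.1^2 - c₁*x.2^2 - c₂*x.3^2 + c₁*c₂*x.4^2 : F) : ℍ[F, c₁, c₂]) := by
    intro x
    constructor <;>
      (ext <;>
        simp only [QuaternionAlgebra.re_mul, QuaternionAlgebra.imI_mul,
          QuaternionAlgebra.imJ_mul, QuaternionAlgebra.imK_mul, QuaternionAlgebra.re_star,
          QuaternionAlgebra.imI_star, QuaternionAlgebra.imJ_star, QuaternionAlgebra.imK_star,
          QuaternionAlgebra.re_coe, QuaternionAlgebra.imI_coe, QuaternionAlgebra.imJ_coe,
          QuaternionAlgebra.imK_coe] <;>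
        ring)
  constructor
  · intro h x₁ x₂ x₃ x₄ heq
    by_contra hne
    set x : ℍ[F, c₁, c₂] := ⟨x₁, x₂, x₃, x₄⟩ with hx
    have hx0 : x ≠ 0 := by
      intro h0
      apply hne
      rw [QuaternionAlgebra.ext_iff] at h0
      exact ⟨h0.1, h0.2.1, h0.2.2.1, h0.2.2.2⟩
    obtain ⟨u, hu⟩ := h x hx0
    have h1 : x * star x = 0 := by
      rw [(key x).1]
      have : x.1^2 - c₁*x.2^2 - c₂*x.3^2 + c₁*c₂*x.4^2 = 0 := heq
      rw [this]; simp
    have : star x = 0 := by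
      have := congrArg (fun y => (↑u⁻¹ * y : ℍ[F, c₁, c₂])) h1
      simpa [← mul_assoc, ← hu] using this
    have : x = 0 := by
      have := congrArg star this
      simpa using this
    exact hx0 this
  · intro h x hx0
    set n : F := x.1^2 - c₁*x.2^2 - c₂*x.3^2 + c₁*c₂*x.4^2 with hn
    have hnne : n ≠ 0 := by
      intro h0
      obtain ⟨h1, h2, h3, h4⟩ := h x.1 x.2 x.3 x.4 h0
      apply hx0
      ext <;> assumption
    refine ⟨⟨x, (n⁻¹ : F) • star x, ?_, ?_⟩, rfl⟩
    · rw [mul_smul_comm, (key x).1, ← QuaternionAlgebra.coe_smul, smul_eq_mul,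
        inv_mul_cancel₀ hnne, QuaternionAlgebra.coe_one]
    · rw [smul_mul_assoc, (key x).2, ← QuaternionAlgebra.coe_smul, smul_eq_mul,
        inv_mul_cancel₀ hnne, QuaternionAlgebra.coe_one]

variable {p : ℕ} [Fact p.Prime]

theorem QPA.toZMod_eq_zero_iff (x : ℤ_[p]) : PadicInt.toZMod x = 0 ↔ (p : ℤ_[p]) ∣ x := by
  rw [← RingHom.mem_ker, PadicInt.ker_toZMod, PadicInt.maximalIdeal_eq_span_p,
    Ideal.mem_span_singleton]

theorem QPA.toZMod_ne_zero_iff (x : ℤ_[p]) : PadicInt.toZMod x ≠ 0 ↔ ‖x‖ = 1 := by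
  rw [Ne, QPA.toZMod_eq_zero_iff, ← PadicInt.norm_lt_one_iff_dvd, not_lt]
  exact ⟨fun h => le_antisymm (PadicInt.norm_le_one x) h, fun h => h.ge⟩

theorem QPA.norm_int_eq_one (x : ℤ) (h : ¬ (p:ℤ) ∣ x) : ‖((x : ℤ) : ℤ_[p])‖ = 1 :=
  le_antisymm (PadicInt.norm_le_one _)
    (not_lt.mp (fun hlt => h ((PadicInt.norm_int_lt_one_iff_dvd x).mp hlt)))

theorem QPA.norm_two_eq_one (hp2 : p ≠ 2) : ‖(2 : ℤ_[p])‖ = 1 := by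
  have : ((2 : ℤ) : ℤ_[p]) = (2 : ℤ_[p]) := by push_cast; ring
  rw [← this]
  refine le_antisymm (PadicInt.norm_le_one _) (not_lt.mp ?_)
  rw [PadicInt.norm_int_lt_one_iff_dvd]
  intro hdvd
  have h2 : p ∣ 2 := by exact_mod_cast hdvd
  exact hp2 ((Nat.prime_dvd_prime_iff_eq Fact.out Nat.prime_two).mp h2)

theorem QPA.p_ne_zero : ((p : ℤ_[p])) ≠ 0 := by
  rw [← PadicInt.coe_ne_zero]
  push_cast
  exact_mod_cast Nat.cast_ne_zero.mpr (Fact.out : p.Prime).ne_zero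

theorem QPA.tz_p : PadicInt.toZMod ((p : ℤ_[p])) = 0 := by
  rw [map_natCast, ZMod.natCast_self]

theorem QPA.hens2 (hp2 : p ≠ 2) (a c s : ℤ_[p]) (ha : ‖a‖ = 1) (hs : PadicInt.toZMod s ≠ 0)
    (h : PadicInt.toZMod (a * s ^ 2 + c) = 0) : ∃ z : ℤ_[p], a * z ^ 2 + c = 0 := by
  set F : Polynomial ℤ_[p] := Polynomial.C a * Polynomial.X ^ 2 + Polynomial.C c with hF
  have hev : ∀ t, F.eval t = a * t ^ 2 + c := by intro t; simp [hF]
  have hderF : F.derivative = Polynomial.C a * (2 * Polynomial.X) := by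
    rw [hF]; simp; exact Or.inl one_add_one_eq_two
  have hder : ∀ t, F.derivative.eval t = 2 * a * t := by
    intro t; rw [hderF]; simp; ring
  have hnorm : ‖F.eval s‖ < ‖F.derivative.eval s‖ ^ 2 := by
    rw [hev, hder]
    have h1 : ‖2 * a * s‖ = 1 := by
      rw [norm_mul, norm_mul, QPA.norm_two_eq_one hp2, ha,
        (QPA.toZMod_ne_zero_iff s).mp hs]; ring
    rw [h1, one_pow]
    rw [← not_le]
    intro hle
    have : ‖a * s ^ 2 + c‖ = 1 := le_antisymm (PadicInt.norm_le_one _) hle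
    exact ((QPA.toZMod_ne_zero_iff _).mpr this) h
  obtain ⟨z, hz, -⟩ := hensels_lemma hnorm
  exact ⟨z, by rw [← hev]; exact hz⟩

theorem QPA.padic_sq (hp2 : p ≠ 2) (t : ℤ_[p]) (ht : ‖t‖ = 1)
    (hsq : IsSquare (PadicInt.toZMod t)) : ∃ z : ℤ_[p], z ^ 2 = t := by
  obtain ⟨r, hr⟩ := hsq
  set s : ℤ_[p] := (r.val : ℤ_[p]) with hs
  have hts : PadicInt.toZMod s = r := by
    rw [hs, map_natCast, ZMod.natCast_zmod_val]
  have hr0 : r ≠ 0 := by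
    intro h0
    rw [h0, mul_zero] at hr
    exact (QPA.toZMod_ne_zero_iff t).mpr ht hr
  obtain ⟨z, hz⟩ := QPA.hens2 hp2 1 (-t) s (by simp) (by rw [hts]; exact hr0)
    (by rw [map_add, map_neg, map_mul, map_pow, hts, map_one, one_mul, hr, sq]; ring)
  exact ⟨z, by linear_combination hz⟩

theorem QPA.zmod_exists_sol (hp2 : p ≠ 2) (u v : ZMod p) (hu : u ≠ 0) (hv : v ≠ 0) :
    ∃ x y : ZMod p, u * x ^ 2 + v * y ^ 2 = 1 := by
  have hcard : Fintype.card (ZMod p) % 2 = 1 := by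
    rw [ZMod.card]
    exact Nat.odd_iff.mp ((Fact.out : p.Prime).odd_of_ne_two hp2)
  have hf : (Polynomial.C u * Polynomial.X ^ 2 + Polynomial.C (-1) : Polynomial (ZMod p)).degree
      = 2 := by compute_degree!
  have hg : (Polynomial.C v * Polynomial.X ^ 2 : Polynomial (ZMod p)).degree = 2 := by
    compute_degree!
  obtain ⟨x, y, hxy⟩ := FiniteField.exists_root_sum_quadratic hf hg hcard
  refine ⟨x, y, ?_⟩
  simp only [Polynomial.eval_add, Polynomial.eval_mul, Polynomial.eval_C,
    Polynomial.eval_pow, Polynomial.eval_X] at hxy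
  linear_combination hxy

theorem QPA.padic_case00 (hp2 : p ≠ 2) (a b : ℤ_[p]) (ha : ‖a‖ = 1) (hb : ‖b‖ = 1) :
    ∃ x y : ℤ_[p], a * x ^ 2 + b * y ^ 2 = 1 := by
  obtain ⟨x₀, y₀, hxy⟩ := QPA.zmod_exists_sol hp2 (PadicInt.toZMod a) (PadicInt.toZMod b)
    ((QPA.toZMod_ne_zero_iff a).mpr ha) ((QPA.toZMod_ne_zero_iff b).mpr hb)
  by_cases hx0 : x₀ = 0
  · have hy0 : y₀ ≠ 0 := by
      intro h0
      rw [hx0, h0] at hxy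
      simp at hxy
    set s : ℤ_[p] := (y₀.val : ℤ_[p]) with hs
    have hts : PadicInt.toZMod s = y₀ := by rw [hs, map_natCast, ZMod.natCast_zmod_val]
    obtain ⟨z, hz⟩ := QPA.hens2 hp2 b (-1) s hb (hts ▸ hy0)
      (by
        rw [map_add, map_mul, map_pow, hts, map_neg, map_one]
        rw [hx0] at hxy
        linear_combination hxy)
    exact ⟨0, z, by linear_combination hz⟩
  · set s : ℤ_[p] := (x₀.val : ℤ_[p]) with hs
    set t : ℤ_[p] := (y₀.val : ℤ_[p]) with ht
    have hts : PadicInt.toZMod s = x₀ := by rw [hs, map_natCast, ZMod.natCast_zmod_val]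
    have htt : PadicInt.toZMod t = y₀ := by rw [ht, map_natCast, ZMod.natCast_zmod_val]
    obtain ⟨z, hz⟩ := QPA.hens2 hp2 a (b * t ^ 2 - 1) s ha (hts ▸ hx0)
      (by
        rw [map_add, map_mul, map_pow, hts, map_sub, map_mul, map_pow, htt, map_one]
        linear_combination hxy)
    exact ⟨z, t, by linear_combination hz⟩

theorem QPA.key_nonsq (α u v : ZMod p) (hα : ¬IsSquare α) (h : u ^ 2 = α * v ^ 2) :
    u = 0 ∧ v = 0 := by
  by_cases hv : v = 0
  · subst hv
    refine ⟨?_, rfl⟩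
    have : u ^ 2 = 0 := by rw [h]; ring
    exact (pow_eq_zero_iff two_ne_zero).mp this
  · exfalso
    apply hα
    refine ⟨u * v⁻¹, ?_⟩
    rw [eq_comm, ← sq, mul_pow]
    rw [h]
    field_simp

theorem QPA.exists_max4 (x₁ x₂ x₃ x₄ : ℚ_[p]) :
    ∃ c : ℚ_[p], (c = x₁ ∨ c = x₂ ∨ c = x₃ ∨ c = x₄) ∧
      ‖x₁‖ ≤ ‖c‖ ∧ ‖x₂‖ ≤ ‖c‖ ∧ ‖x₃‖ ≤ ‖c‖ ∧ ‖x₄‖ ≤ ‖c‖ := by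
  rcases le_total ‖x₁‖ ‖x₂‖ with h12 | h12 <;>
    rcases le_total ‖x₃‖ ‖x₄‖ with h34 | h34
  · rcases le_total ‖x₂‖ ‖x₄‖ with h | h
    · exact ⟨x₄, by tauto, ⟨by linarith, by linarith, by linarith, by linarith⟩⟩
    · exact ⟨x₂, by tauto, ⟨by linarith, by linarith, by linarith, by linarith⟩⟩
  · rcases le_total ‖x₂‖ ‖x₃‖ with h | h
    · exact ⟨x₃, by tauto, ⟨by linarith, by linarith, by linarith, by linarith⟩⟩
    · exact ⟨x₂, by tauto, ⟨by linarith, by linarith, by linarith, by linarith⟩⟩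
  · rcases le_total ‖x₁‖ ‖x₄‖ with h | h
    · exact ⟨x₄, by tauto, ⟨by linarith, by linarith, by linarith, by linarith⟩⟩
    · exact ⟨x₁, by tauto, ⟨by linarith, by linarith, by linarith, by linarith⟩⟩
  · rcases le_total ‖x₁‖ ‖x₃‖ with h | h
    · exact ⟨x₃, by tauto, ⟨by linarith, by linarith, by linarith, by linarith⟩⟩
    · exact ⟨x₁, by tauto, ⟨by linarith, by linarith, by linarith, by linarith⟩⟩

theorem QPA.exists_primitive (A B : ℤ) (x₁ x₂ x₃ x₄ : ℚ_[p])
    (hx : ¬(x₁ = 0 ∧ x₂ = 0 ∧ x₃ = 0 ∧ x₄ = 0))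
    (heq : x₁ ^ 2 - A * x₂ ^ 2 - B * x₃ ^ 2 + A * B * x₄ ^ 2 = 0) :
    ∃ y₁ y₂ y₃ y₄ : ℤ_[p],
      y₁ ^ 2 - A * y₂ ^ 2 - B * y₃ ^ 2 + A * B * y₄ ^ 2 = 0 ∧
      (‖y₁‖ = 1 ∨ ‖y₂‖ = 1 ∨ ‖y₃‖ = 1 ∨ ‖y₄‖ = 1) := by
  obtain ⟨c, hmem, h1, h2, h3, h4⟩ := QPA.exists_max4 x₁ x₂ x₃ x₄
  have hc : c ≠ 0 := by
    intro h0
    subst h0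
    simp only [norm_zero] at h1 h2 h3 h4
    exact hx ⟨norm_le_zero_iff.mp h1, norm_le_zero_iff.mp h2,
      norm_le_zero_iff.mp h3, norm_le_zero_iff.mp h4⟩
  have hcpos : (0:ℝ) < ‖c‖ := norm_pos_iff.mpr hc
  have hle : ∀ x : ℚ_[p], ‖x‖ ≤ ‖c‖ → ‖x / c‖ ≤ 1 := fun x hx => by
    rw [norm_div]; exact div_le_one_of_le₀ hx (norm_nonneg c)
  set y₁ : ℤ_[p] := ⟨x₁ / c, hle _ h1⟩ with hy₁
  set y₂ : ℤ_[p] := ⟨x₂ / c, hle _ h2⟩ with hy₂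
  set y₃ : ℤ_[p] := ⟨x₃ / c, hle _ h3⟩ with hy₃
  set y₄ : ℤ_[p] := ⟨x₄ / c, hle _ h4⟩ with hy₄
  have e1 : x₁ = c * (y₁ : ℚ_[p]) := by rw [hy₁]; field_simp
  have e2 : x₂ = c * (y₂ : ℚ_[p]) := by rw [hy₂]; field_simp
  have e3 : x₃ = c * (y₃ : ℚ_[p]) := by rw [hy₃]; field_simp
  have e4 : x₄ = c * (y₄ : ℚ_[p]) := by rw [hy₄]; field_simp
  refine ⟨y₁, y₂, y₃, y₄, ?_, ?_⟩
  · have hq : (y₁:ℚ_[p]) ^ 2 - A * (y₂:ℚ_[p]) ^ 2 - B * (y₃:ℚ_[p]) ^ 2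
        + A * B * (y₄:ℚ_[p]) ^ 2 = 0 := by
      have hc2 : c ^ 2 ≠ 0 := pow_ne_zero 2 hc
      apply mul_left_cancel₀ hc2
      rw [mul_zero]
      rw [e1, e2, e3, e4] at heq
      linear_combination heq
    have : (((y₁ ^ 2 - A * y₂ ^ 2 - B * y₃ ^ 2 + A * B * y₄ ^ 2 : ℤ_[p])) : ℚ_[p]) = 0 := by
      push_cast
      convert hq using 2
    rwa [PadicInt.coe_eq_zero] at this
  · rcases hmem with h | h | h | h
    · left; rw [PadicInt.norm_def, hy₁]; subst h; simp [div_self hc]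
    · right; left; rw [PadicInt.norm_def, hy₂]; subst h; simp [div_self hc]
    · right; right; left; rw [PadicInt.norm_def, hy₃]; subst h; simp [div_self hc]
    · right; right; right; rw [PadicInt.norm_def, hy₄]; subst h; simp [div_self hc]

theorem QPA.aniso01 (a b₀ : ℤ) (hb₀ : ((b₀ : ZMod p)) ≠ 0) (hA : ¬IsSquare ((a : ZMod p)))
    (y₁ y₂ y₃ y₄ : ℤ_[p])
    (heq : y₁ ^ 2 - (a : ℤ_[p]) * y₂ ^ 2 - (p : ℤ_[p]) * (b₀ : ℤ_[p]) * y₃ ^ 2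
      + (a : ℤ_[p]) * ((p : ℤ_[p]) * (b₀ : ℤ_[p])) * y₄ ^ 2 = 0)
    (hunit : ‖y₁‖ = 1 ∨ ‖y₂‖ = 1 ∨ ‖y₃‖ = 1 ∨ ‖y₄‖ = 1) : False := by
  set r := (PadicInt.toZMod : ℤ_[p] →+* ZMod p) with hr
  have step1 : (r y₁) ^ 2 = (a : ZMod p) * (r y₂) ^ 2 := by
    have h := congrArg r heq
    simp only [map_add, map_sub, map_mul, map_pow, map_intCast, map_zero, hr, QPA.tz_p] at h
    linear_combination h
  obtain ⟨h1, h2⟩ := QPA.key_nonsq _ _ _ hA step1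
  obtain ⟨z₁, hz₁⟩ := (QPA.toZMod_eq_zero_iff y₁).mp h1
  obtain ⟨z₂, hz₂⟩ := (QPA.toZMod_eq_zero_iff y₂).mp h2
  have heq2 : (p : ℤ_[p]) * z₁ ^ 2 - (a : ℤ_[p]) * ((p : ℤ_[p]) * z₂ ^ 2)
      - (b₀ : ℤ_[p]) * y₃ ^ 2 + (a : ℤ_[p]) * (b₀ : ℤ_[p]) * y₄ ^ 2 = 0 := by
    apply mul_left_cancel₀ (QPA.p_ne_zero (p := p))
    rw [hz₁, hz₂] at heq
    rw [mul_zero]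
    linear_combination heq
  have step2 : (r y₃) ^ 2 = (a : ZMod p) * (r y₄) ^ 2 := by
    have h := congrArg r heq2
    simp only [map_add, map_sub, map_mul, map_pow, map_intCast, map_zero, hr, QPA.tz_p] at h
    have h' : (b₀ : ZMod p) * ((a : ZMod p) * (r y₄) ^ 2 - (r y₃) ^ 2) = 0 := by
      linear_combination h
    rcases mul_eq_zero.mp h' with h'' | h''
    · exact absurd h'' hb₀
    · linear_combination -h''
  obtain ⟨h3, h4⟩ := QPA.key_nonsq _ _ _ hA step2
  rcases hunit with h | h | h | h
  · exact (QPA.toZMod_ne_zero_iff y₁).mpr h h1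
  · exact (QPA.toZMod_ne_zero_iff y₂).mpr h h2
  · exact (QPA.toZMod_ne_zero_iff y₃).mpr h h3
  · exact (QPA.toZMod_ne_zero_iff y₄).mpr h h4

theorem QPA.aniso11 (a₀ b₀ : ℤ) (ha₀ : ((a₀ : ZMod p)) ≠ 0) (hb₀ : ((b₀ : ZMod p)) ≠ 0)
    (hα : ¬IsSquare (-((a₀ : ZMod p))⁻¹ * (b₀ : ZMod p)))
    (y₁ y₂ y₃ y₄ : ℤ_[p])
    (heq : y₁ ^ 2 - (p : ℤ_[p]) * (a₀ : ℤ_[p]) * y₂ ^ 2 - (p : ℤ_[p]) * (b₀ : ℤ_[p]) * y₃ ^ 2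
      + ((p : ℤ_[p]) * (a₀ : ℤ_[p])) * ((p : ℤ_[p]) * (b₀ : ℤ_[p])) * y₄ ^ 2 = 0)
    (hunit : ‖y₁‖ = 1 ∨ ‖y₂‖ = 1 ∨ ‖y₃‖ = 1 ∨ ‖y₄‖ = 1) : False := by
  set r := (PadicInt.toZMod : ℤ_[p] →+* ZMod p) with hr
  set α := -((a₀ : ZMod p))⁻¹ * (b₀ : ZMod p) with hαdef
  have hα' : ¬IsSquare α := hα
  have hαa : α * (a₀ : ZMod p) ^ 2 = -((a₀ : ZMod p)) * (b₀ : ZMod p) := by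
    rw [hαdef]
    field_simp
  have step1 : (r y₁) ^ 2 = 0 := by
    have h := congrArg r heq
    simp only [map_add, map_sub, map_mul, map_pow, map_intCast, map_zero, hr, QPA.tz_p] at h
    linear_combination h
  have h1 : r y₁ = 0 := (pow_eq_zero_iff two_ne_zero).mp step1
  obtain ⟨z₁, hz₁⟩ := (QPA.toZMod_eq_zero_iff y₁).mp h1
  have heq2 : (p : ℤ_[p]) * z₁ ^ 2 - (a₀ : ℤ_[p]) * y₂ ^ 2 - (b₀ : ℤ_[p]) * y₃ ^ 2
      + (p : ℤ_[p]) * (a₀ : ℤ_[p]) * (b₀ : ℤ_[p]) * y₄ ^ 2 = 0 := by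
    apply mul_left_cancel₀ (QPA.p_ne_zero (p := p))
    rw [hz₁] at heq
    rw [mul_zero]
    linear_combination heq
  have step2 : (r y₂) ^ 2 = α * (r y₃) ^ 2 := by
    have h := congrArg r heq2
    simp only [map_add, map_sub, map_mul, map_pow, map_intCast, map_zero, hr, QPA.tz_p] at h
    have hαa2 : (a₀ : ZMod p) * α = -(b₀ : ZMod p) := by
      rw [hαdef]; field_simp
    have h' : (a₀ : ZMod p) * ((r y₂) ^ 2 - α * (r y₃) ^ 2) = 0 := by
      linear_combination -h - (r y₃) ^ 2 * hαa2
    rcases mul_eq_zero.mp h' with h'' | h''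
    · exact absurd h'' ha₀
    · linear_combination h''
  obtain ⟨h2, h3⟩ := QPA.key_nonsq _ _ _ hα' step2
  obtain ⟨z₂, hz₂⟩ := (QPA.toZMod_eq_zero_iff y₂).mp h2
  obtain ⟨z₃, hz₃⟩ := (QPA.toZMod_eq_zero_iff y₃).mp h3
  have heq3 : z₁ ^ 2 - (p : ℤ_[p]) * (a₀ : ℤ_[p]) * z₂ ^ 2 - (p : ℤ_[p]) * (b₀ : ℤ_[p]) * z₃ ^ 2
      + (a₀ : ℤ_[p]) * (b₀ : ℤ_[p]) * y₄ ^ 2 = 0 := by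
    apply mul_left_cancel₀ (QPA.p_ne_zero (p := p))
    rw [hz₂, hz₃] at heq2
    rw [mul_zero]
    linear_combination heq2
  have step3 : (r z₁) ^ 2 = α * ((a₀ : ZMod p) * (r y₄)) ^ 2 := by
    have h := congrArg r heq3
    simp only [map_add, map_sub, map_mul, map_pow, map_intCast, map_zero, hr, QPA.tz_p] at h
    rw [mul_pow, ← mul_assoc, hαa]
    linear_combination h
  obtain ⟨-, h4'⟩ := QPA.key_nonsq _ _ _ hα' step3
  have h4 : r y₄ = 0 := by
    rcases mul_eq_zero.mp h4' with h'' | h''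
    · exact absurd h'' ha₀
    · exact h''
  rcases hunit with h | h | h | h
  · exact (QPA.toZMod_ne_zero_iff y₁).mpr h h1
  · exact (QPA.toZMod_ne_zero_iff y₂).mpr h h2
  · exact (QPA.toZMod_ne_zero_iff y₃).mpr h h3
  · exact (QPA.toZMod_ne_zero_iff y₄).mpr h h4

theorem QPA.sf_not_dvd (a a₀ : ℤ) (hsa : Squarefree a) (h : a = (p:ℤ) * a₀) :
    ¬ (p:ℤ) ∣ a₀ := by
  rintro ⟨c, hc⟩
  have hdvd : (p:ℤ) * (p:ℤ) ∣ a := ⟨c, by rw [h, hc]; ring⟩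
  have hu := hsa _ hdvd
  have hp2' : (2:ℤ) ≤ (p:ℤ) := by exact_mod_cast (Fact.out : p.Prime).two_le
  rcases Int.isUnit_iff.mp hu with h' | h' <;> omega

end Aux

/-- For an odd prime `p` and nonzero squarefree integers `a, b` with `v_p(a) ≤ v_p(b)`,
the quaternion algebra `ℍ[ℚ_p, a, b]` is a division ring iff (i) `p ∤ a`, `p ∣ b` and
`a` is not a square mod `p`, or (ii) `p ∣ a`, `p ∣ b` and `-(a/p)⁻¹·(b/p)` is not a
square mod `p`. -/
theorem quaternionAlgebra_padic_isDivisionRing_iff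
    (p : ℕ) [Fact p.Prime] (hp2 : p ≠ 2)
    (a b : ℤ) (ha : a ≠ 0) (hb : b ≠ 0)
    (hsa : Squarefree a) (hsb : Squarefree b)
    (hval : padicValInt p a ≤ padicValInt p b) :
    (∀ x : ℍ[ℚ_[p], (a : ℚ_[p]), (b : ℚ_[p])], x ≠ 0 → IsUnit x) ↔
      ((¬ (p : ℤ) ∣ a ∧ (p : ℤ) ∣ b ∧ ¬ IsSquare ((a : ZMod p))) ∨
        ((p : ℤ) ∣ a ∧ (p : ℤ) ∣ b ∧
          ∀ a₀ b₀ : ℤ, a = (p : ℤ) * a₀ → b = (p : ℤ) * b₀ →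
            ¬ IsSquare (-((a₀ : ZMod p))⁻¹ * ((b₀ : ZMod p))))) := by
  rw [QPA.div_iff]
  have hpZ : ((p:ℤ)) ≠ 0 := by exact_mod_cast (Fact.out : p.Prime).ne_zero
  by_cases hpa : (p : ℤ) ∣ a
  · by_cases hpb : (p : ℤ) ∣ b
    · -- case (1,1)
      obtain ⟨a₀, ha₀⟩ := hpa
      obtain ⟨b₀, hb₀⟩ := hpb
      have hna₀ : ¬ (p:ℤ) ∣ a₀ := QPA.sf_not_dvd a a₀ hsa ha₀
      have hnb₀ : ¬ (p:ℤ) ∣ b₀ := QPA.sf_not_dvd b b₀ hsb hb₀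
      have hza₀ : ((a₀ : ZMod p)) ≠ 0 := by
        rwa [Ne, ZMod.intCast_zmod_eq_zero_iff_dvd]
      have hzb₀ : ((b₀ : ZMod p)) ≠ 0 := by
        rwa [Ne, ZMod.intCast_zmod_eq_zero_iff_dvd]
      have hca : ((a : ℤ) : ℤ_[p]) = (p : ℤ_[p]) * ((a₀ : ℤ) : ℤ_[p]) := by
        rw [ha₀]; push_cast; ring
      have hcb : ((b : ℤ) : ℤ_[p]) = (p : ℤ_[p]) * ((b₀ : ℤ) : ℤ_[p]) := by
        rw [hb₀]; push_cast; ring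
      constructor
      · intro haniso
        right
        refine ⟨⟨a₀, ha₀⟩, ⟨b₀, hb₀⟩, ?_⟩
        intro a₀' b₀' ha' hb'
        have e1 : a₀' = a₀ := mul_left_cancel₀ hpZ (ha' ▸ ha₀)
        have e2 : b₀' = b₀ := mul_left_cancel₀ hpZ (hb' ▸ hb₀)
        rw [e1, e2]
        intro hsq
        -- construct a square root of -a₀*b₀ in ℤ_[p]
        have hsq' : IsSquare (PadicInt.toZMod (((-(a₀*b₀) : ℤ)) : ℤ_[p])) := by
          rw [map_intCast]
          obtain ⟨s, hs⟩ := hsq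
          refine ⟨s * (a₀ : ZMod p), ?_⟩
          have hinv : (a₀ : ZMod p) * ((a₀ : ZMod p))⁻¹ = 1 := mul_inv_cancel₀ hza₀
          push_cast
          linear_combination ((a₀ : ZMod p))^2 * hs + ((b₀ : ZMod p)) * ((a₀:ZMod p)) * hinv
        have hnorm : ‖(((-(a₀*b₀) : ℤ)) : ℤ_[p])‖ = 1 := by
          apply QPA.norm_int_eq_one
          intro hdvd
          rcases (Int.Prime.dvd_mul' (by exact_mod_cast Fact.out) (dvd_neg.mp hdvd))
            with h' | h'
          · exact hna₀ h'
          · exact hnb₀ h'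
        obtain ⟨z, hz⟩ := QPA.padic_sq hp2 _ hnorm hsq'
        have hzq : ((z : ℚ_[p]))^2 = ((-(a₀*b₀) : ℤ) : ℚ_[p]) := by exact_mod_cast congrArg _ hz
        have hcon := haniso 0 (z : ℚ_[p]) ((a₀ : ℤ) : ℚ_[p]) 0 ?_
        · have : ((a₀ : ℤ) : ℚ_[p]) = 0 := hcon.2.2.1
          have : a₀ = 0 := by exact_mod_cast this
          apply ha
          rw [ha₀, this, mul_zero]
        · rw [ha₀, hb₀]
          push_cast at hzq ⊢
          linear_combination (-(p:ℚ_[p]) * ((a₀:ℤ) : ℚ_[p])) * hzq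
      · rintro (⟨hna, -⟩ | ⟨-, -, hfor⟩)
        · exact absurd ⟨a₀, ha₀⟩ hna
        · have hkey := hfor a₀ b₀ ha₀ hb₀
          intro x₁ x₂ x₃ x₄ heqq
          by_contra hx
          obtain ⟨y₁, y₂, y₃, y₄, heqz, hunit⟩ := QPA.exists_primitive a b x₁ x₂ x₃ x₄ hx heqq
          rw [hca, hcb] at heqz
          exact QPA.aniso11 a₀ b₀ hza₀ hzb₀ hkey y₁ y₂ y₃ y₄ heqz hunit
    · -- case p ∣ a, p ∤ b : excluded by the valuation hypothesis
      exfalso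
      have h1 : 1 ≤ padicValInt p a := by
        have := (padicValInt_dvd_iff 1 a).mp (by simpa using hpa)
        tauto
      have h2 : padicValInt p b = 0 := padicValInt.eq_zero_of_not_dvd hpb
      omega
  · by_cases hpb : (p : ℤ) ∣ b
    · -- case (0,1)
      obtain ⟨b₀, hb₀⟩ := hpb
      have hnb₀ : ¬ (p:ℤ) ∣ b₀ := QPA.sf_not_dvd b b₀ hsb hb₀
      have hzb₀ : ((b₀ : ZMod p)) ≠ 0 := by
        rwa [Ne, ZMod.intCast_zmod_eq_zero_iff_dvd]
      have hcb : ((b : ℤ) : ℤ_[p]) = (p : ℤ_[p]) * ((b₀ : ℤ) : ℤ_[p]) := by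
        rw [hb₀]; push_cast; ring
      constructor
      · intro haniso
        left
        refine ⟨hpa, ⟨b₀, hb₀⟩, ?_⟩
        intro hsq
        have hsq' : IsSquare (PadicInt.toZMod ((a : ℤ) : ℤ_[p])) := by
          rwa [map_intCast]
        obtain ⟨z, hz⟩ := QPA.padic_sq hp2 _ (QPA.norm_int_eq_one a hpa) hsq'
        have hzq : ((z : ℚ_[p]))^2 = ((a : ℤ) : ℚ_[p]) := by exact_mod_cast congrArg _ hz
        have hcon := haniso (z : ℚ_[p]) 1 0 0 (by push_cast at hzq ⊢; linear_combination hzq)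
        exact one_ne_zero hcon.2.1
      · rintro (⟨-, -, hnsq⟩ | ⟨hpa', -⟩)
        · intro x₁ x₂ x₃ x₄ heqq
          by_contra hx
          obtain ⟨y₁, y₂, y₃, y₄, heqz, hunit⟩ := QPA.exists_primitive a b x₁ x₂ x₃ x₄ hx heqq
          rw [hcb] at heqz
          exact QPA.aniso01 a b₀ hzb₀ hnsq y₁ y₂ y₃ y₄ heqz hunit
        · exact absurd hpa' hpa
    · -- case (0,0) : both sides false
      constructor
      · intro haniso
        exfalso
        obtain ⟨x, y, hxy⟩ := QPA.padic_case00 hp2 ((a:ℤ) : ℤ_[p]) ((b:ℤ) : ℤ_[p])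
          (QPA.norm_int_eq_one a hpa) (QPA.norm_int_eq_one b hpb)
        have hxyq : ((a:ℤ) : ℚ_[p]) * ((x : ℚ_[p]))^2 + ((b:ℤ) : ℚ_[p]) * ((y : ℚ_[p]))^2
            = 1 := by exact_mod_cast congrArg (fun t : ℤ_[p] => (t : ℚ_[p])) hxy
        have hcon := haniso 1 (x : ℚ_[p]) (y : ℚ_[p]) 0 (by linear_combination -hxyq)
        exact one_ne_zero hcon.1
      · rintro (⟨-, hpb', -⟩ | ⟨hpa', -⟩)
        · exact absurd hpb' hpb
        · exact absurd hpa' hpa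
end

section
/- Let a be an odd squarefree integer. Then the quaternion algebra ℍ[ℚ₂, a, 2] over the 2-adic numbers is a division ring (every nonzero element is invertible) if and only if a ≡ 3 (mod 8) or a ≡ 5 (mod 8). (Equivalently, the Hilbert symbol (a,2) over ℚ₂ equals −1 exactly when a ≡ 3, 5 mod 8.) -/
open Quaternion Polynomial

section QAux

variable {F : Type*} [Field F] {c₁ c₂ : F}

private def qnorm (q : ℍ[F, c₁, c₂]) : F :=
  q.re^2 - c₁ * q.imI^2 - c₂ * q.imJ^2 + c₁ * c₂ * q.imK^2

private theorem mul_star_eq (q : ℍ[F, c₁, c₂]) :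
    q * star q = QuaternionAlgebra.coe (qnorm q) := by
  ext <;> simp [qnorm, QuaternionAlgebra.coe] <;> ring

private theorem star_mul_eq (q : ℍ[F, c₁, c₂]) :
    star q * q = QuaternionAlgebra.coe (qnorm q) := by
  have h := mul_star_eq (star q)
  rw [star_star] at h
  rw [h]
  unfold qnorm
  norm_num

private theorem isUnit_of_qnorm_ne_zero (q : ℍ[F, c₁, c₂]) (h : qnorm q ≠ 0) : IsUnit q := by
  refine ⟨⟨q, (qnorm q)⁻¹ • star q, ?_, ?_⟩, rfl⟩
  · rw [mul_smul_comm, mul_star_eq, ← QuaternionAlgebra.coe_smul, smul_eq_mul,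
      inv_mul_cancel₀ h]
    rfl
  · rw [smul_mul_assoc, star_mul_eq, ← QuaternionAlgebra.coe_smul, smul_eq_mul,
      inv_mul_cancel₀ h]
    rfl

private theorem not_isUnit_of_qnorm_eq_zero (q : ℍ[F, c₁, c₂]) (hq : q ≠ 0) (h : qnorm q = 0) :
    ¬ IsUnit q := by
  intro hu
  have h1 : q * star q = 0 := by
    rw [mul_star_eq, h]; exact QuaternionAlgebra.coe_zero
  have h2 : star q = 0 := by
    obtain ⟨u, rfl⟩ := hu
    have := congrArg (fun y => (↑u⁻¹ : ℍ[F, c₁, c₂]) * y) h1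
    simpa [← mul_assoc] using this
  exact hq (by simpa using congrArg star h2)

end QAux

private lemma sq_idx : ∀ u : ZMod (2^4),
    ∃ j : Fin 4, u*u = ![0,1,4,9] j ∧ (u.val % 2 = 0 ↔ (j = 0 ∨ j = 2)) := by
  decide

private lemma comb : ∀ i j k l m : Fin 4,
    (![0,1,4,9] j : ZMod (2^4)) - ![3,5,11,13] i * ![0,1,4,9] k
      - 2 * ![0,1,4,9] l + 2 * ![3,5,11,13] i * ![0,1,4,9] m = 0 →
    (j = 0 ∨ j = 2) ∧ (k = 0 ∨ k = 2) ∧ (l = 0 ∨ l = 2) ∧ (m = 0 ∨ m = 2) := by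
  decide

private lemma main16 (A t x y z : ZMod (2^4)) (hA : A = 3 ∨ A = 5 ∨ A = 11 ∨ A = 13)
    (heq : t*t - A*(x*x) - 2*(y*y) + 2*A*(z*z) = 0) :
    t.val % 2 = 0 ∧ x.val % 2 = 0 ∧ y.val % 2 = 0 ∧ z.val % 2 = 0 := by
  obtain ⟨i, hi⟩ : ∃ i : Fin 4, A = ![3,5,11,13] i := by
    rcases hA with h|h|h|h
    exacts [⟨0, h⟩, ⟨1, h⟩, ⟨2, h⟩, ⟨3, h⟩]
  obtain ⟨j, hj, hj'⟩ := sq_idx t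
  obtain ⟨k, hk, hk'⟩ := sq_idx x
  obtain ⟨l, hl, hl'⟩ := sq_idx y
  obtain ⟨m, hm, hm'⟩ := sq_idx z
  rw [hi, hj, hk, hl, hm] at heq
  obtain ⟨h1, h2, h3, h4⟩ := comb i j k l m heq
  exact ⟨hj'.2 h1, hk'.2 h2, hl'.2 h3, hm'.2 h4⟩

/-- From evenness of the image mod `2^4`, deduce divisibility by 2 in `ℤ_[2]`. -/
private lemma two_dvd_of_val_even (T : ℤ_[2]) (h : (PadicInt.toZModPow 4 T).val % 2 = 0) :
    ‖T‖ < 1 := by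
  rw [PadicInt.norm_lt_one_iff_dvd]
  have h1 : PadicInt.toZModPow (p := 2) 1 T = 0 := by
    rw [← PadicInt.cast_toZModPow 1 4 (by norm_num) T]
    have hdvd : (2^1 : ℕ) ∣ (PadicInt.toZModPow 4 T).val := by omega
    rw [← ZMod.natCast_val]
    exact (ZMod.natCast_eq_zero_iff _ _).2 hdvd
  have h2 : T ∈ RingHom.ker (PadicInt.toZModPow (p := 2) 1) := h1
  rw [PadicInt.ker_toZModPow] at h2
  have := Ideal.mem_span_singleton.1 h2
  simpa using this

private lemma int_aniso (a : ℤ) (ha : a % 8 = 3 ∨ a % 8 = 5) (T X Y Z : ℤ_[2])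
    (heq : T*T - (a : ℤ_[2])*(X*X) - 2*(Y*Y) + 2*(a : ℤ_[2])*(Z*Z) = 0) :
    ‖T‖ < 1 ∧ ‖X‖ < 1 ∧ ‖Y‖ < 1 ∧ ‖Z‖ < 1 := by
  set φ := PadicInt.toZModPow (p := 2) 4 with hφ
  have he : φ T * φ T - (a : ZMod (2^4)) * (φ X * φ X) - 2 * (φ Y * φ Y)
      + 2 * (a : ZMod (2^4)) * (φ Z * φ Z) = 0 := by
    have := congrArg φ heq
    push_cast at this
    simpa [map_ofNat] using this
  have hA : (a : ZMod (2^4)) = 3 ∨ (a : ZMod (2^4)) = 5 ∨ (a : ZMod (2^4)) = 11 ∨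
      (a : ZMod (2^4)) = 13 := by
    have h16 : a % 16 = 3 ∨ a % 16 = 11 ∨ a % 16 = 5 ∨ a % 16 = 13 := by omega
    have key : (a : ZMod (2^4)) = ((a % 16 : ℤ) : ZMod (2^4)) := by
      conv_lhs => rw [← Int.mul_ediv_add_emod a 16]
      push_cast
      have h0 : (16 : ZMod (2^4)) = 0 := by decide
      rw [h0]
      ring
    rcases h16 with h|h|h|h <;> rw [key, h] <;> simp <;> decide
  obtain ⟨h1, h2, h3, h4⟩ := main16 _ _ _ _ _ hA he
  exact ⟨two_dvd_of_val_even T h1, two_dvd_of_val_even X h2,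
    two_dvd_of_val_even Y h3, two_dvd_of_val_even Z h4⟩

private lemma qq_aniso (a : ℤ) (ha : a % 8 = 3 ∨ a % 8 = 5) (t x y z : ℚ_[2])
    (heq : t*t - (a : ℚ_[2])*(x*x) - 2*(y*y) + 2*(a : ℚ_[2])*(z*z) = 0) :
    t = 0 ∧ x = 0 ∧ y = 0 ∧ z = 0 := by
  by_contra hne
  have H : ∀ u v : ℚ_[2], ∃ w : ℚ_[2], ‖u‖ ≤ ‖w‖ ∧ ‖v‖ ≤ ‖w‖ ∧ (w = u ∨ w = v) := by
    intro u v
    rcases le_total ‖u‖ ‖v‖ with h|h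
    exacts [⟨v, h, le_rfl, Or.inr rfl⟩, ⟨u, le_rfl, h, Or.inl rfl⟩]
  obtain ⟨w₁, h1t, h1x, h1m⟩ := H t x
  obtain ⟨w₂, h2y, h2z, h2m⟩ := H y z
  obtain ⟨w, hw1, hw2, hwm⟩ := H w₁ w₂
  have hbt : ‖t‖ ≤ ‖w‖ := h1t.trans hw1
  have hbx : ‖x‖ ≤ ‖w‖ := h1x.trans hw1
  have hby : ‖y‖ ≤ ‖w‖ := h2y.trans hw2
  have hbz : ‖z‖ ≤ ‖w‖ := h2z.trans hw2
  have hw0 : w ≠ 0 := by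
    intro h0
    rw [h0, norm_zero] at hbt hbx hby hbz
    exact hne ⟨norm_le_zero_iff.1 hbt, norm_le_zero_iff.1 hbx,
      norm_le_zero_iff.1 hby, norm_le_zero_iff.1 hbz⟩
  have hwpos : 0 < ‖w‖ := norm_pos_iff.2 hw0
  have hb : ∀ u : ℚ_[2], ‖u‖ ≤ ‖w‖ → ‖w⁻¹ * u‖ ≤ 1 := by
    intro u hu
    rw [norm_mul, norm_inv, ← div_eq_inv_mul, div_le_one hwpos]
    exact hu
  set T : ℤ_[2] := ⟨w⁻¹ * t, hb t hbt⟩ with hT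
  set X : ℤ_[2] := ⟨w⁻¹ * x, hb x hbx⟩ with hX
  set Y : ℤ_[2] := ⟨w⁻¹ * y, hb y hby⟩ with hY
  set Z : ℤ_[2] := ⟨w⁻¹ * z, hb z hbz⟩ with hZ
  have heq2 : T*T - (a : ℤ_[2])*(X*X) - 2*(Y*Y) + 2*(a : ℤ_[2])*(Z*Z) = 0 := by
    apply Subtype.coe_injective
    have h2c : ((2 : ℤ_[2]) : ℚ_[2]) = 2 := rfl
    simp only [PadicInt.coe_mul, PadicInt.coe_sub, PadicInt.coe_add]
    push_cast [hT, hX, hY, hZ, h2c]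
    field_simp
    linear_combination heq
  obtain ⟨c1, c2, c3, c4⟩ := int_aniso a ha T X Y Z heq2
  have hlt : ‖w⁻¹ * w‖ < 1 := by
    rcases hwm with rfl|rfl
    · rcases h1m with rfl|rfl
      · simpa [PadicInt.norm_def, hT] using c1
      · simpa [PadicInt.norm_def, hX] using c2
    · rcases h2m with rfl|rfl
      · simpa [PadicInt.norm_def, hY] using c3
      · simpa [PadicInt.norm_def, hZ] using c4
  rw [inv_mul_cancel₀ hw0, norm_one] at hlt
  exact lt_irrefl 1 hlt

private lemma sqrt_of_mod8 (n : ℤ) (hn : n % 8 = 1) : ∃ s : ℤ_[2], s * s = (n : ℤ_[2]) := by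
  have h1 : (X^2 - C ((n : ℤ_[2]))).eval 1 = ((1 - n : ℤ) : ℤ_[2]) := by
    push_cast [eval_sub, eval_pow, eval_X, eval_C]; ring
  have h2 : (X^2 - C ((n : ℤ_[2]))).derivative.eval 1 = (2 : ℤ_[2]) := by
    simp [derivative_sub, derivative_pow]
  have hnorm : ‖(X^2 - C ((n : ℤ_[2]))).eval 1‖ < ‖(X^2 - C ((n : ℤ_[2]))).derivative.eval 1‖^2 := by
    rw [h1, h2]
    have hd : ((2:ℤ)^3 : ℤ) ∣ (1 - n) := by omega
    have hle : ‖((1 - n : ℤ) : ℤ_[2])‖ ≤ (2:ℝ)^(-(3:ℤ)) := by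
      exact_mod_cast (PadicInt.norm_int_le_pow_iff_dvd (p := 2) (k := 1 - n) (n := 3)).2
        (by exact_mod_cast hd)
    have h2n : ‖(2 : ℤ_[2])‖ = 2⁻¹ := by
      simpa using PadicInt.norm_p (p := 2)
    rw [h2n]
    calc ‖((1 - n : ℤ) : ℤ_[2])‖ ≤ (2:ℝ)^(-(3:ℤ)) := hle
      _ < (2:ℝ)⁻¹ ^ 2 := by norm_num
  obtain ⟨z, hz, -, -, -⟩ := hensels_lemma hnorm
  refine ⟨z, ?_⟩
  simp only [coe_aeval_eq_eval, eval_sub, eval_pow, eval_X, eval_C, sub_eq_zero] at hz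
  rw [← hz]; ring

/-- For an odd squarefree integer `a`, the quaternion algebra `ℍ[ℚ₂, a, 2]` is a
division ring iff `a ≡ 3` or `a ≡ 5 (mod 8)`. -/
theorem quaternionAlgebra_two_adic_a_two_isDivisionRing_iff
    (a : ℤ) (hodd : Odd a) (hsa : Squarefree a) :
    (∀ x : ℍ[ℚ_[2], (a : ℚ_[2]), (2 : ℚ_[2])], x ≠ 0 → IsUnit x) ↔
      (a % 8 = 3 ∨ a % 8 = 5) := by
  have hmod2 : a % 2 = 1 := Int.odd_iff.1 hodd
  constructor
  · intro hdiv
    by_contra hcon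
    have h8 : a % 8 = 1 ∨ a % 8 = 7 := by omega
    rcases h8 with h8 | h8
    · obtain ⟨s, hs⟩ := sqrt_of_mod8 a h8
      set q : ℍ[ℚ_[2], (a : ℚ_[2]), (2 : ℚ_[2])] := ⟨(s : ℚ_[2]), 1, 0, 0⟩ with hq
      have hq0 : q ≠ 0 := by
        intro h
        have := congrArg QuaternionAlgebra.imI h
        simp [hq] at this
      have hn : qnorm q = 0 := by
        have hs2 : ((s : ℚ_[2])) * ((s : ℚ_[2])) = (a : ℚ_[2]) := by
          have := congrArg (fun u : ℤ_[2] => (u : ℚ_[2])) hs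
          push_cast at this
          exact this
        simp only [qnorm, hq]
        push_cast
        linear_combination hs2
      exact not_isUnit_of_qnorm_eq_zero q hq0 hn (hdiv q hq0)
    · obtain ⟨s, hs⟩ := sqrt_of_mod8 (a + 2) (by omega)
      set q : ℍ[ℚ_[2], (a : ℚ_[2]), (2 : ℚ_[2])] := ⟨(s : ℚ_[2]), 1, 1, 0⟩ with hq
      have hq0 : q ≠ 0 := by
        intro h
        have := congrArg QuaternionAlgebra.imI h
        simp [hq] at this
      have hn : qnorm q = 0 := by
        have hs2 : ((s : ℚ_[2])) * ((s : ℚ_[2])) = (a : ℚ_[2]) + 2 := by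
          have := congrArg (fun u : ℤ_[2] => (u : ℚ_[2])) hs
          push_cast at this
          exact this
        simp only [qnorm, hq]
        push_cast
        linear_combination hs2
      exact not_isUnit_of_qnorm_eq_zero q hq0 hn (hdiv q hq0)
  · intro ha q hq0
    apply isUnit_of_qnorm_ne_zero
    intro h0
    have heq : q.re * q.re - (a : ℚ_[2]) * (q.imI * q.imI) - 2 * (q.imJ * q.imJ)
        + 2 * (a : ℚ_[2]) * (q.imK * q.imK) = 0 := by
      simp only [qnorm] at h0
      linear_combination h0
    obtain ⟨h1, h2, h3, h4⟩ := qq_aniso a ha _ _ _ _ heq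
    exact hq0 (QuaternionAlgebra.ext h1 h2 h3 h4)
end

section
/- Let a and b be odd prime numbers (viewed as integers). Then the quaternion algebra ℍ[ℚ₂, a, b] over the 2-adic numbers is a division ring (every nonzero element is invertible) if and only if a ≡ 3 (mod 4) and b ≡ 3 (mod 4). (Equivalently, the Hilbert symbol over ℚ₂ satisfies (a,b) = (−1)^{((a−1)/2)·((b−1)/2)}.) -/
open Quaternion

private lemma quat_mul_star_eq {R : Type*} [CommRing R] (c₁ c₂ : R) (x : ℍ[R,c₁,c₂]) :
    x * star x = ((x.re^2 - c₁*x.imI^2 - c₂*x.imJ^2 + c₁*c₂*x.imK^2 : R) : ℍ[R,c₁,c₂]) := by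
  ext <;>
    simp [QuaternionAlgebra.re_mul, QuaternionAlgebra.imI_mul, QuaternionAlgebra.imJ_mul,
      QuaternionAlgebra.imK_mul, pow_two] <;> ring

private lemma quat_star_mul_eq {R : Type*} [CommRing R] (c₁ c₂ : R) (x : ℍ[R,c₁,c₂]) :
    star x * x = ((x.re^2 - c₁*x.imI^2 - c₂*x.imJ^2 + c₁*c₂*x.imK^2 : R) : ℍ[R,c₁,c₂]) := by
  ext <;>
    simp [QuaternionAlgebra.re_mul, QuaternionAlgebra.imI_mul, QuaternionAlgebra.imJ_mul,
      QuaternionAlgebra.imK_mul, pow_two] <;> ring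

private lemma quat_isUnit_of_norm_ne_zero {F : Type*} [Field F] (c₁ c₂ : F) (x : ℍ[F,c₁,c₂])
    (h : x.re^2 - c₁*x.imI^2 - c₂*x.imJ^2 + c₁*c₂*x.imK^2 ≠ 0) : IsUnit x := by
  set n : F := x.re^2 - c₁*x.imI^2 - c₂*x.imJ^2 + c₁*c₂*x.imK^2 with hn
  refine ⟨⟨x, (n⁻¹ : F) • star x, ?_, ?_⟩, rfl⟩
  · rw [mul_smul_comm, quat_mul_star_eq, ← hn, ← QuaternionAlgebra.coe_smul, smul_eq_mul,
      inv_mul_cancel₀ h, QuaternionAlgebra.coe_one]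
  · rw [smul_mul_assoc, quat_star_mul_eq, ← hn, ← QuaternionAlgebra.coe_smul, smul_eq_mul,
      inv_mul_cancel₀ h, QuaternionAlgebra.coe_one]

private lemma quat_not_isUnit_of_norm_zero {F : Type*} [Field F] (c₁ c₂ : F) (x : ℍ[F,c₁,c₂])
    (hx : x ≠ 0) (h : x.re^2 - c₁*x.imI^2 - c₂*x.imJ^2 + c₁*c₂*x.imK^2 = 0) : ¬ IsUnit x := by
  rintro ⟨u, rfl⟩
  have h0 : (u : ℍ[F,c₁,c₂]) * star (u : ℍ[F,c₁,c₂]) = 0 := by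
    rw [quat_mul_star_eq, h, QuaternionAlgebra.coe_zero]
  have hs : star (u : ℍ[F,c₁,c₂]) = 0 := by
    have := congrArg (fun y => (↑u⁻¹ : ℍ[F,c₁,c₂]) * y) h0
    simpa [← mul_assoc] using this
  exact hx (by simpa using congrArg star hs)

private lemma key8 (A B : ZMod (2^3)) (hA : A = 3 ∨ A = 7) (hB : B = 3 ∨ B = 7) :
    ∀ X Y Z W : ZMod (2^3),
    (X = 1 ∨ Y = 1 ∨ Z = 1 ∨ W = 1) → X^2 - A*Y^2 - B*Z^2 + A*B*W^2 ≠ 0 := by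
  rcases hA with rfl|rfl <;> rcases hB with rfl|rfl <;> decide

private lemma anis (a b : ℤ)
    (ha : ((a : ZMod (2^3)) = 3 ∨ (a : ZMod (2^3)) = 7))
    (hb : ((b : ZMod (2^3)) = 3 ∨ (b : ZMod (2^3)) = 7))
    (c : Fin 4 → ℚ_[2]) (i₀ : Fin 4) (hc : c i₀ ≠ 0) :
    (c 0)^2 - a*(c 1)^2 - b*(c 2)^2 + a*b*(c 3)^2 ≠ 0 := by
  intro heq
  obtain ⟨j, hj⟩ := Finite.exists_max fun i => ‖c i‖
  have hcj : c j ≠ 0 := by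
    intro h0
    apply hc
    have := hj i₀
    rw [h0, norm_zero] at this
    exact norm_eq_zero.mp (le_antisymm this (norm_nonneg _))
  have hle : ∀ i, ‖c i / c j‖ ≤ 1 := by
    intro i
    rw [norm_div]
    exact div_le_one_of_le₀ (hj i) (norm_nonneg _)
  set e : Fin 4 → ℤ_[2] := fun i => ⟨c i / c j, hle i⟩ with he
  have hej : e j = 1 := Subtype.ext (div_self hcj)
  have heq2 : (e 0)^2 - a*(e 1)^2 - b*(e 2)^2 + a*b*(e 3)^2 = 0 := by
    apply Subtype.ext
    show (c 0 / c j)^2 - ((a:ℤ):ℚ_[2])*(c 1 / c j)^2 - ((b:ℤ):ℚ_[2])*(c 2 / c j)^2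
      + ((a:ℤ):ℚ_[2])*((b:ℤ):ℚ_[2])*(c 3 / c j)^2 = 0
    linear_combination (1 / (c j)^2) * heq
  have hmap := congrArg (PadicInt.toZModPow (p := 2) 3) heq2
  push_cast [map_add, map_sub, map_mul, map_pow, map_intCast, map_zero] at hmap
  have h1 : (PadicInt.toZModPow (p := 2) 3) (e 0) = 1 ∨
      (PadicInt.toZModPow (p := 2) 3) (e 1) = 1 ∨
      (PadicInt.toZModPow (p := 2) 3) (e 2) = 1 ∨
      (PadicInt.toZModPow (p := 2) 3) (e 3) = 1 := by
    fin_cases j <;>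
      [left; (right; left); (right; right; left); (right; right; right)] <;>
      · rw [show (1 : ZMod (2^3)) = (PadicInt.toZModPow (p := 2) 3) 1 from (map_one _).symm]
        exact congrArg _ hej
  exact key8 _ _ ha hb _ _ _ _ h1 hmap

private lemma exists_yz (a b : ℕ) (ha2 : a % 2 = 1) (hb2 : b % 2 = 1)
    (h : a % 4 = 1 ∨ b % 4 = 1) :
    ∃ y z : ℕ, (y ≠ 0 ∨ z ≠ 0) ∧ (a * y^2 + b * z^2) % 8 = 1 := by
  have ha8 : a % 8 = 1 ∨ a % 8 = 3 ∨ a % 8 = 5 ∨ a % 8 = 7 := by omega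
  have hb8 : b % 8 = 1 ∨ b % 8 = 3 ∨ b % 8 = 5 ∨ b % 8 = 7 := by omega
  rcases ha8 with ha | ha | ha | ha <;> rcases hb8 with hb | hb | hb | hb
  all_goals first
    | exact ⟨1, 0, Or.inl one_ne_zero, by omega⟩
    | exact ⟨0, 1, Or.inr one_ne_zero, by omega⟩
    | exact ⟨1, 2, Or.inl one_ne_zero, by omega⟩
    | exact ⟨2, 1, Or.inl two_ne_zero, by omega⟩

private lemma exists_sqrt (u : ℕ) (hu : u % 8 = 1) : ∃ s : ℚ_[2], s ^ 2 = (u : ℚ_[2]) := by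
  set F : Polynomial ℤ_[2] := Polynomial.X ^ 2 - Polynomial.C (u : ℤ_[2]) with hF
  have heval : F.eval 1 = ((1 - (u:ℤ) : ℤ) : ℤ_[2]) := by simp [hF]
  have hd1 : F.derivative.eval 1 = ((2:ℤ) : ℤ_[2]) := by
    simp [hF, Polynomial.derivative_sub, Polynomial.derivative_pow]
  have hnorm : ‖F.eval 1‖ < ‖F.derivative.eval 1‖ ^ 2 := by
    rw [heval, hd1]
    have h1 : ‖((1 - (u:ℤ) : ℤ) : ℤ_[2])‖ ≤ ((2:ℕ):ℝ) ^ (-(3:ℕ) : ℤ) := by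
      rw [PadicInt.norm_int_le_pow_iff_dvd]
      exact_mod_cast (by omega : ((2:ℤ)^3) ∣ (1 - (u:ℤ)))
    have h2 : ‖((2:ℤ) : ℤ_[2])‖ = 2⁻¹ := by
      have := PadicInt.norm_p (p := 2)
      simpa using this
    rw [h2]
    calc ‖((1 - (u:ℤ) : ℤ) : ℤ_[2])‖ ≤ ((2:ℕ):ℝ) ^ (-(3:ℕ) : ℤ) := h1
      _ < (2:ℝ)⁻¹ ^ 2 := by norm_num
  obtain ⟨z, hz, -, -, -⟩ := hensels_lemma (p := 2) (F := F) (a := 1) hnorm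
  refine ⟨(z : ℚ_[2]), ?_⟩
  have hz2 : z ^ 2 = ((u:ℕ) : ℤ_[2]) := by
    have := hz
    simpa [hF, sub_eq_zero] using this
  calc (z : ℚ_[2]) ^ 2 = ((z ^ 2 : ℤ_[2]) : ℚ_[2]) := by push_cast; ring
    _ = (u : ℚ_[2]) := by rw [hz2]; push_cast; ring

/-- For odd prime numbers `a, b` (viewed as integers), the quaternion algebra
`ℍ[ℚ₂, a, b]` is a division ring iff `a ≡ 3 (mod 4)` and `b ≡ 3 (mod 4)`. -/
theorem quaternionAlgebra_two_adic_odd_primes_isDivisionRing_iff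
    (a b : ℕ) (hpa : a.Prime) (hpb : b.Prime) (hoa : a ≠ 2) (hob : b ≠ 2) :
    (∀ x : ℍ[ℚ_[2], ((a : ℤ) : ℚ_[2]), ((b : ℤ) : ℚ_[2])], x ≠ 0 → IsUnit x) ↔
      (a % 4 = 3 ∧ b % 4 = 3) := by
  have ha2 : a % 2 = 1 := Nat.odd_iff.mp (hpa.odd_of_ne_two hoa)
  have hb2 : b % 2 = 1 := Nat.odd_iff.mp (hpb.odd_of_ne_two hob)
  constructor
  · intro h
    by_contra hn
    have hor : a % 4 = 1 ∨ b % 4 = 1 := by omega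
    obtain ⟨y, z, hyz, hmod⟩ := exists_yz a b ha2 hb2 hor
    obtain ⟨s, hs⟩ := exists_sqrt (a * y^2 + b * z^2) hmod
    set x : ℍ[ℚ_[2], ((a : ℤ) : ℚ_[2]), ((b : ℤ) : ℚ_[2])] :=
      ⟨s, (y : ℚ_[2]), (z : ℚ_[2]), 0⟩ with hxdef
    have hx0 : x ≠ 0 := by
      intro h0
      rcases hyz with hy | hz
      · exact hy (by rw [hxdef] at h0; simpa using congrArg QuaternionAlgebra.imI h0)
      · exact hz (by rw [hxdef] at h0; simpa using congrArg QuaternionAlgebra.imJ h0)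
    refine quat_not_isUnit_of_norm_zero _ _ x hx0 ?_ (h x hx0)
    show s^2 - ((a : ℤ) : ℚ_[2]) * (y : ℚ_[2])^2 - ((b : ℤ) : ℚ_[2]) * (z : ℚ_[2])^2
        + ((a : ℤ) : ℚ_[2]) * ((b : ℤ) : ℚ_[2]) * (0:ℚ_[2])^2 = 0
    rw [hs]; push_cast; ring
  · rintro ⟨ha4, hb4⟩ x hx
    apply quat_isUnit_of_norm_ne_zero
    have hA : (((a : ℕ) : ℤ) : ZMod (2^3)) = 3 ∨ (((a : ℕ) : ℤ) : ZMod (2^3)) = 7 := by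
      have h8 : a % 8 = 3 ∨ a % 8 = 7 := by omega
      have hc : (((a : ℕ) : ℤ) : ZMod (2^3)) = ((a % 2^3 : ℕ) : ZMod (2^3)) := by
        push_cast [ZMod.natCast_mod]; ring
      rcases h8 with h | h
      · left; rw [hc, show a % 2^3 = 3 from by omega]; decide
      · right; rw [hc, show a % 2^3 = 7 from by omega]; decide
    have hB : (((b : ℕ) : ℤ) : ZMod (2^3)) = 3 ∨ (((b : ℕ) : ℤ) : ZMod (2^3)) = 7 := by
      have h8 : b % 8 = 3 ∨ b % 8 = 7 := by omega
      have hc : (((b : ℕ) : ℤ) : ZMod (2^3)) = ((b % 2^3 : ℕ) : ZMod (2^3)) := by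
        push_cast [ZMod.natCast_mod]; ring
      rcases h8 with h | h
      · left; rw [hc, show b % 2^3 = 3 from by omega]; decide
      · right; rw [hc, show b % 2^3 = 7 from by omega]; decide
    have hcomp : x.re ≠ 0 ∨ x.imI ≠ 0 ∨ x.imJ ≠ 0 ∨ x.imK ≠ 0 := by
      by_contra hcc
      push_neg at hcc
      exact hx (by ext <;> simp [hcc.1, hcc.2.1, hcc.2.2.1, hcc.2.2.2])
    have main := fun (i₀ : Fin 4) (hc : ![x.re, x.imI, x.imJ, x.imK] i₀ ≠ 0) =>
      anis ((a:ℕ):ℤ) ((b:ℕ):ℤ) hA hB ![x.re, x.imI, x.imJ, x.imK] i₀ hc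
    rcases hcomp with hc | hc | hc | hc
    · simpa using main 0 (by simpa using hc)
    · simpa using main 1 (by simpa using hc)
    · simpa using main 2 (by simpa using hc)
    · simpa using main 3 (by simpa using hc)
end

section
/- Let p and q be primes with p ≡ 3 (mod 4), q ≡ 1 (mod 8), and (q|p) = 1. Let n ≥ 0 and r = 2n+1. In B = ℍ[ℚ, −p, −q], choose an integer x with x² ≡ −p (mod q), integers v, w with v·q + w·(2x) = 1, and an integer u with 0 ≤ u < 2q and u ≡ v·q + 2·w (mod 2q). Set e₁ = 1, e₂ = (1 + i)/2, e₃ = pⁿ·(j + u·k)/(2q), e₄ = pⁿ·k in B. Then the ℤ-submodule S of B spanned by e₁, e₂, e₃, e₄ satisfies: (i) 1 ∈ S; (ii) S is closed under multiplication; (iii) e₁, e₂, e₃, e₄ are linearly independent over ℚ; and (iv) the 4×4 rational matrix M with entries M(s,t) = trd(e_s·e_t) has |det M| = p^{2(2n+1)}. That is, S is an order of level N = p^r = p^{2n+1} in the definite quaternion algebra of discriminant p. -/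
open Quaternion


theorem nt_facts (p q : ℕ) [hP : Fact p.Prime] [hQ : Fact q.Prime]
    (hp4 : p % 4 = 3) (hq8 : q % 8 = 1)
    (x v w u : ℤ)
    (hx : x ^ 2 ≡ -(p : ℤ) [ZMOD (q : ℤ)])
    (hvw : v * (q : ℤ) + w * (2 * x) = 1)
    (hu : u ≡ v * (q : ℤ) + 2 * w [ZMOD 2 * (q : ℤ)]) :
    u % 2 = 1 ∧ (4 * (q:ℤ)) ∣ 1 + u^2 * p := by
  have hpz : (p:ℤ) % 4 = 3 := by exact_mod_cast hp4
  have hqz : (q:ℤ) % 8 = 1 := by exact_mod_cast hq8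
  have hu2 : u % 2 = 1 := by
    obtain ⟨t, ht⟩ : (2*(q:ℤ)) ∣ (v * (q : ℤ) + 2 * w) - u := hu.dvd
    obtain ⟨A, hA⟩ : ∃ A : ℤ, u = 2*A+1 := ⟨w - w*x - q*t, by linear_combination hvw - ht⟩
    omega
  refine ⟨hu2, ?_⟩
  have h4 : (4:ℤ) ∣ 1 + u^2 * p := by
    obtain ⟨s, hs⟩ : (2:ℤ) ∣ u - 1 := by omega
    have hu' : u = 2*s+1 := by omega
    obtain ⟨t, ht⟩ : (4:ℤ) ∣ (p:ℤ) + 1 := by omega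
    exact ⟨t + (s^2+s)*p, by rw [hu']; linear_combination ht⟩
  have hq : (q:ℤ) ∣ 1 + u^2 * p := by
    have h1 : 2*w*x ≡ 1 [ZMOD (q:ℤ)] :=
      Int.modEq_iff_dvd.mpr ⟨v, by linear_combination -hvw⟩
    have huq : u ≡ 2*w [ZMOD (q:ℤ)] := by
      refine Int.modEq_iff_dvd.mpr ?_
      obtain ⟨c, hc⟩ := hu.dvd
      exact ⟨2*c - v, by linear_combination hc⟩
    have hxu : x * u ≡ 1 [ZMOD (q:ℤ)] := by
      calc x * u ≡ x * (2*w) [ZMOD (q:ℤ)] := (Int.ModEq.refl x).mul huq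
        _ = 2*w*x := by ring
        _ ≡ 1 [ZMOD (q:ℤ)] := h1
    have key : x^2 * (1 + u^2*p) ≡ 0 [ZMOD (q:ℤ)] := by
      calc x^2 * (1 + u^2*p) = x^2 + (x*u)^2 * p := by ring
        _ ≡ -(p:ℤ) + 1^2 * p [ZMOD (q:ℤ)] := hx.add ((hxu.pow 2).mul_right p)
        _ = 0 := by ring
    have hdvd : (q:ℤ) ∣ x^2 * (1 + u^2*p) := (Int.modEq_zero_iff_dvd).mp key
    have hqx : ¬ ((q:ℤ) ∣ x) := by
      rintro ⟨c, hc⟩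
      have hd1 : (q:ℤ) ∣ 1 := ⟨v + 2*w*c, by rw [← hvw, hc]; ring⟩
      have := Int.le_of_dvd one_pos hd1
      have := hQ.out.two_le
      omega
    have hqp : Prime (q:ℤ) := Nat.prime_iff_prime_int.mp hQ.out
    rcases hqp.dvd_mul.mp hdvd with h | h
    · exact absurd (hqp.dvd_of_dvd_pow h) hqx
    · exact h
  have hcop : IsCoprime (4:ℤ) (q:ℤ) := by
    have h2 : IsCoprime (2:ℤ) (q:ℤ) := by
      rw [Int.isCoprime_iff_gcd_eq_one]
      have hc := (Nat.coprime_primes Nat.prime_two hQ.out).mpr (by omega)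
      simpa [Int.gcd] using hc
    have h4c := h2.mul_left h2
    norm_num at h4c
    exact h4c
  exact hcop.mul_dvd h4 hq


set_option maxHeartbeats 2000000 in
/-- For primes `p ≡ 3 (mod 4)`, `q ≡ 1 (mod 8)`, `(q|p) = 1`, the ℤ-span of
`1`, `(1+i)/2`, `pⁿ(j + u·k)/(2q)`, `pⁿ·k` in `ℍ[ℚ, -p, -q]` is an order of
level `p^(2n+1)`. -/
theorem order_level_p_odd_power_p3mod4
    (p q : ℕ) [Fact p.Prime] [Fact q.Prime]
    (hp4 : p % 4 = 3) (hq8 : q % 8 = 1) (hleg : legendreSym p q = 1)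
    (n : ℕ) (x v w u : ℤ)
    (hx : x ^ 2 ≡ -(p : ℤ) [ZMOD (q : ℤ)])
    (hvw : v * (q : ℤ) + w * (2 * x) = 1)
    (hu0 : 0 ≤ u) (hult : u < 2 * (q : ℤ))
    (hu : u ≡ v * (q : ℤ) + 2 * w [ZMOD 2 * (q : ℤ)])
    (e : Fin 4 → ℍ[ℚ, -(p : ℚ), -(q : ℚ)])
    (he : e = ![1,
                ⟨1 / 2, 1 / 2, 0, 0⟩,
                ⟨0, 0, (p : ℚ) ^ n / (2 * q), (p : ℚ) ^ n * (u : ℚ) / (2 * q)⟩,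
                ⟨0, 0, 0, (p : ℚ) ^ n⟩])
    (S : Submodule ℤ ℍ[ℚ, -(p : ℚ), -(q : ℚ)])
    (hS : S = Submodule.span ℤ (Set.range e)) :
    (1 : ℍ[ℚ, -(p : ℚ), -(q : ℚ)]) ∈ S ∧
    (∀ u' ∈ S, ∀ v' ∈ S, u' * v' ∈ S) ∧
    LinearIndependent ℚ e ∧
    |(Matrix.of fun s t : Fin 4 => (e s * e t + star (e s * e t)).re).det| =
      (p : ℚ) ^ (2 * (2 * n + 1)) := by
  obtain ⟨hu2, hdq⟩ := nt_facts p q hp4 hq8 x v w u hx hvw hu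
  have hpz : (p:ℤ) % 4 = 3 := by exact_mod_cast hp4
  have hqz : (q:ℤ) % 8 = 1 := by exact_mod_cast hq8
  obtain ⟨A, hA⟩ : ∃ A : ℤ, (p:ℤ) + 1 = 4 * A := ⟨((p:ℤ)+1)/4, by omega⟩
  obtain ⟨B, hB⟩ : ∃ B : ℤ, 1 - u * p = 2 * B := by
    have hpo : (p:ℤ) % 2 = 1 := by omega
    obtain ⟨s, hs⟩ : (2:ℤ) ∣ u - 1 := by omega
    obtain ⟨t, ht⟩ : (2:ℤ) ∣ (p:ℤ) - 1 := by omega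
    exact ⟨-s*p - t, by linear_combination -(p:ℤ)*hs - ht⟩
  obtain ⟨C, hC⟩ : ∃ C : ℤ, 1 + u * p = 2 * C := by
    have hpo : (p:ℤ) % 2 = 1 := by omega
    obtain ⟨s, hs⟩ : (2:ℤ) ∣ u - 1 := by omega
    obtain ⟨t, ht⟩ : (2:ℤ) ∣ (p:ℤ) - 1 := by omega
    exact ⟨s*p + t + 1, by linear_combination (p:ℤ)*hs + ht⟩
  obtain ⟨m, hm⟩ : ∃ m : ℤ, 1 + u^2 * p = 4 * q * m := hdq
  have hq0 : (q:ℚ) ≠ 0 := Nat.cast_ne_zero.mpr (Fact.out (p := q.Prime)).pos.ne'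
  have hp0 : (p:ℚ) ≠ 0 := Nat.cast_ne_zero.mpr (Fact.out (p := p.Prime)).pos.ne'
  have hAq : (p:ℚ) + 1 = 4 * (A:ℚ) := by exact_mod_cast congrArg (Int.cast : ℤ → ℚ) hA
  have hBq : 1 - (u:ℚ) * p = 2 * (B:ℚ) := by exact_mod_cast congrArg (Int.cast : ℤ → ℚ) hB
  have hCq : 1 + (u:ℚ) * p = 2 * (C:ℚ) := by exact_mod_cast congrArg (Int.cast : ℤ → ℚ) hC
  have hmq : 1 + (u:ℚ)^2 * p = 4 * q * (m:ℚ) := by exact_mod_cast congrArg (Int.cast : ℤ → ℚ) hm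
  have hA' : (A:ℚ) = ((p:ℚ) + 1)/4 := by linarith
  have hB' : (B:ℚ) = (1 - (u:ℚ)*p)/2 := by linarith
  have hC' : (C:ℚ) = (1 + (u:ℚ)*p)/2 := by linarith
  have hm' : (m:ℚ) = (1 + (u:ℚ)^2*p)/(4*q) := by
    field_simp
    linarith
  subst hS
  have h0 : e 0 = 1 := by rw [he]; rfl
  have h1 : e 1 = (⟨1/2, 1/2, 0, 0⟩ : ℍ[ℚ, -(p : ℚ), -(q : ℚ)]) := by rw [he]; rfl
  have h2 : e 2 = (⟨0, 0, (p : ℚ) ^ n / (2 * q), (p : ℚ) ^ n * (u : ℚ) / (2 * q)⟩ : ℍ[ℚ, -(p : ℚ), -(q : ℚ)]) := by rw [he]; rfl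
  have h3 : e 3 = (⟨0, 0, 0, (p : ℚ) ^ n⟩ : ℍ[ℚ, -(p : ℚ), -(q : ℚ)]) := by rw [he]; rfl
  have hmem : ∀ i, e i ∈ Submodule.span ℤ (Set.range e) :=
    fun i => Submodule.subset_span ⟨i, rfl⟩
  set S := Submodule.span ℤ (Set.range e) with hS
  have M11 : e 1 * e 1 = e 1 + (-A) • e 0 := by
    simp only [h0, h1, h2, h3]
    apply QuaternionAlgebra.ext <;>
    · simp only [QuaternionAlgebra.re_mul, QuaternionAlgebra.imI_mul, QuaternionAlgebra.imJ_mul, QuaternionAlgebra.imK_mul, QuaternionAlgebra.re_add, QuaternionAlgebra.imI_add, QuaternionAlgebra.imJ_add, QuaternionAlgebra.imK_add, QuaternionAlgebra.re_smul, QuaternionAlgebra.imI_smul, QuaternionAlgebra.imJ_smul, QuaternionAlgebra.imK_smul, QuaternionAlgebra.re_one, QuaternionAlgebra.imI_one, QuaternionAlgebra.imJ_one, QuaternionAlgebra.imK_one, zsmul_eq_mul, smul_eq_mul, QuaternionAlgebra.re_intCast, QuaternionAlgebra.imI_intCast, QuaternionAlgebra.imJ_intCast, QuaternionAlgebra.imK_intCast,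 QuaternionAlgebra.re_natCast, QuaternionAlgebra.imI_natCast, QuaternionAlgebra.imJ_natCast, QuaternionAlgebra.imK_natCast, QuaternionAlgebra.re_coe, QuaternionAlgebra.imI_coe, QuaternionAlgebra.imJ_coe, QuaternionAlgebra.imK_coe]
      push_cast
      try simp only [hA', hB', hC', hm']
      field_simp
      try ring
  have M12 : e 1 * e 2 = B • e 2 + m • e 3 := by
    simp only [h0, h1, h2, h3]
    apply QuaternionAlgebra.ext <;>
    · simp only [QuaternionAlgebra.re_mul, QuaternionAlgebra.imI_mul, QuaternionAlgebra.imJ_mul, QuaternionAlgebra.imK_mul, QuaternionAlgebra.re_add, QuaternionAlgebra.imI_add, QuaternionAlgebra.imJ_add, QuaternionAlgebra.imK_add, QuaternionAlgebra.re_smul, QuaternionAlgebra.imI_smul, QuaternionAlgebra.imJ_smul, QuaternionAlgebra.imK_smul, QuaternionAlgebra.re_one, QuaternionAlgebra.imI_one, QuaternionAlgebra.imJ_one, QuaternionAlgebra.imK_one, zsmul_eq_mul, smul_eq_mul, QuaternionAlgebra.re_intCast, QuaternionAlgebra.imI_intCast, QuaternionAlgebra.imJ_intCast, QuaternionAlgebra.imK_intCast,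 QuaternionAlgebra.re_natCast, QuaternionAlgebra.imI_natCast, QuaternionAlgebra.imJ_natCast, QuaternionAlgebra.imK_natCast, QuaternionAlgebra.re_coe, QuaternionAlgebra.imI_coe, QuaternionAlgebra.imJ_coe, QuaternionAlgebra.imK_coe]
      push_cast
      try simp only [hA', hB', hC', hm']
      field_simp
      try ring
  have M21 : e 2 * e 1 = C • e 2 + (-m) • e 3 := by
    simp only [h0, h1, h2, h3]
    apply QuaternionAlgebra.ext <;>
    · simp only [QuaternionAlgebra.re_mul, QuaternionAlgebra.imI_mul, QuaternionAlgebra.imJ_mul, QuaternionAlgebra.imK_mul, QuaternionAlgebra.re_add, QuaternionAlgebra.imI_add, QuaternionAlgebra.imJ_add, QuaternionAlgebra.imK_add, QuaternionAlgebra.re_smul, QuaternionAlgebra.imI_smul, QuaternionAlgebra.imJ_smul, QuaternionAlgebra.imK_smul, QuaternionAlgebra.re_one, QuaternionAlgebra.imI_one, QuaternionAlgebra.imJ_one, QuaternionAlgebra.imK_one, zsmul_eq_mul, smul_eq_mul, QuaternionAlgebra.re_intCast, QuaternionAlgebra.imI_intCast, QuaternionAlgebra.imJ_intCast, QuaternionAlgebra.imK_intCast,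 QuaternionAlgebra.re_natCast, QuaternionAlgebra.imI_natCast, QuaternionAlgebra.imJ_natCast, QuaternionAlgebra.imK_natCast, QuaternionAlgebra.re_coe, QuaternionAlgebra.imI_coe, QuaternionAlgebra.imJ_coe, QuaternionAlgebra.imK_coe]
      push_cast
      try simp only [hA', hB', hC', hm']
      field_simp
      try ring
  have M13 : e 1 * e 3 = (-(p:ℤ)*(q:ℤ)) • e 2 + C • e 3 := by
    simp only [h0, h1, h2, h3]
    apply QuaternionAlgebra.ext <;>
    · simp only [QuaternionAlgebra.re_mul, QuaternionAlgebra.imI_mul, QuaternionAlgebra.imJ_mul, QuaternionAlgebra.imK_mul, QuaternionAlgebra.re_add, QuaternionAlgebra.imI_add, QuaternionAlgebra.imJ_add, QuaternionAlgebra.imK_add, QuaternionAlgebra.re_smul, QuaternionAlgebra.imI_smul, QuaternionAlgebra.imJ_smul, QuaternionAlgebra.imK_smul, QuaternionAlgebra.re_one, QuaternionAlgebra.imI_one, QuaternionAlgebra.imJ_one, QuaternionAlgebra.imK_one, zsmul_eq_mul, smul_eq_mul, QuaternionAlgebra.re_intCast, QuaternionAlgebra.imI_intCast, QuaternionAlgebra.imJ_intCast,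 QuaternionAlgebra.imK_intCast, QuaternionAlgebra.re_natCast, QuaternionAlgebra.imI_natCast, QuaternionAlgebra.imJ_natCast, QuaternionAlgebra.imK_natCast, QuaternionAlgebra.re_coe, QuaternionAlgebra.imI_coe, QuaternionAlgebra.imJ_coe, QuaternionAlgebra.imK_coe]
      push_cast
      try simp only [hA', hB', hC', hm']
      field_simp
      try ring
  have M31 : e 3 * e 1 = ((p:ℤ)*(q:ℤ)) • e 2 + B • e 3 := by
    simp only [h0, h1, h2, h3]
    apply QuaternionAlgebra.ext <;>
    · simp only [QuaternionAlgebra.re_mul, QuaternionAlgebra.imI_mul, QuaternionAlgebra.imJ_mul, QuaternionAlgebra.imK_mul, QuaternionAlgebra.re_add, QuaternionAlgebra.imI_add, QuaternionAlgebra.imJ_add, QuaternionAlgebra.imK_add, QuaternionAlgebra.re_smul, QuaternionAlgebra.imI_smul, QuaternionAlgebra.imJ_smul, QuaternionAlgebra.imK_smul, QuaternionAlgebra.re_one, QuaternionAlgebra.imI_one, QuaternionAlgebra.imJ_one, QuaternionAlgebra.imK_one, zsmul_eq_mul, smul_eq_mul, QuaternionAlgebra.re_intCast, QuaternionAlgebra.imI_intCast,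 QuaternionAlgebra.imJ_intCast, QuaternionAlgebra.imK_intCast, QuaternionAlgebra.re_natCast, QuaternionAlgebra.imI_natCast, QuaternionAlgebra.imJ_natCast, QuaternionAlgebra.imK_natCast, QuaternionAlgebra.re_coe, QuaternionAlgebra.imI_coe, QuaternionAlgebra.imJ_coe, QuaternionAlgebra.imK_coe]
      push_cast
      try simp only [hA', hB', hC', hm']
      field_simp
      try ring
  have M22 : e 2 * e 2 = (-(p:ℤ)^(2*n)*m) • e 0 := by
    simp only [h0, h1, h2, h3]
    apply QuaternionAlgebra.ext <;>
    · simp only [QuaternionAlgebra.re_mul, QuaternionAlgebra.imI_mul, QuaternionAlgebra.imJ_mul, QuaternionAlgebra.imK_mul, QuaternionAlgebra.re_add, QuaternionAlgebra.imI_add, QuaternionAlgebra.imJ_add, QuaternionAlgebra.imK_add, QuaternionAlgebra.re_smul, QuaternionAlgebra.imI_smul, QuaternionAlgebra.imJ_smul, QuaternionAlgebra.imK_smul, QuaternionAlgebra.re_one, QuaternionAlgebra.imI_one, QuaternionAlgebra.imJ_one, QuaternionAlgebra.imK_one, zsmul_eq_mul, smul_eq_mul, QuaternionAlgebra.re_intCast,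 QuaternionAlgebra.imI_intCast, QuaternionAlgebra.imJ_intCast, QuaternionAlgebra.imK_intCast, QuaternionAlgebra.re_natCast, QuaternionAlgebra.imI_natCast, QuaternionAlgebra.imJ_natCast, QuaternionAlgebra.imK_natCast, QuaternionAlgebra.re_coe, QuaternionAlgebra.imI_coe, QuaternionAlgebra.imJ_coe, QuaternionAlgebra.imK_coe]
      push_cast
      try simp only [hA', hB', hC', hm']
      field_simp
      try ring
  have M23 : e 2 * e 3 = ((p:ℤ)^(2*n)) • e 1 + (-(p:ℤ)^(2*n)*C) • e 0 := by
    simp only [h0, h1, h2, h3]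
    apply QuaternionAlgebra.ext <;>
    · simp only [QuaternionAlgebra.re_mul, QuaternionAlgebra.imI_mul, QuaternionAlgebra.imJ_mul, QuaternionAlgebra.imK_mul, QuaternionAlgebra.re_add, QuaternionAlgebra.imI_add, QuaternionAlgebra.imJ_add, QuaternionAlgebra.imK_add, QuaternionAlgebra.re_smul, QuaternionAlgebra.imI_smul, QuaternionAlgebra.imJ_smul, QuaternionAlgebra.imK_smul, QuaternionAlgebra.re_one, QuaternionAlgebra.imI_one, QuaternionAlgebra.imJ_one, QuaternionAlgebra.imK_one, zsmul_eq_mul, smul_eq_mul, QuaternionAlgebra.re_intCast, QuaternionAlgebra.imI_intCast, QuaternionAlgebra.imJ_intCast, QuaternionAlgebra.imK_intCast, QuaternionAlgebra.re_natCast, QuaternionAlgebra.imI_natCast, QuaternionAlgebra.imJ_natCast, QuaternionAlgebra.imK_natCast, QuaternionAlgebra.re_coe, QuaternionAlgebra.imI_coe, QuaternionAlgebra.imJ_coe, QuaternionAlgebra.imK_coe]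
      push_cast
      try simp only [hA', hB', hC', hm']
      field_simp
      try ring
  have M32 : e 3 * e 2 = (-(p:ℤ)^(2*n)) • e 1 + ((p:ℤ)^(2*n)*B) • e 0 := by
    simp only [h0, h1, h2, h3]
    apply QuaternionAlgebra.ext <;>
    · simp only [QuaternionAlgebra.re_mul, QuaternionAlgebra.imI_mul, QuaternionAlgebra.imJ_mul, QuaternionAlgebra.imK_mul, QuaternionAlgebra.re_add, QuaternionAlgebra.imI_add, QuaternionAlgebra.imJ_add, QuaternionAlgebra.imK_add, QuaternionAlgebra.re_smul, QuaternionAlgebra.imI_smul, QuaternionAlgebra.imJ_smul, QuaternionAlgebra.imK_smul, QuaternionAlgebra.re_one, QuaternionAlgebra.imI_one, QuaternionAlgebra.imJ_one, QuaternionAlgebra.imK_one, zsmul_eq_mul, smul_eq_mul, QuaternionAlgebra.re_intCast, QuaternionAlgebra.imI_intCast, QuaternionAlgebra.imJ_intCast, QuaternionAlgebra.imK_intCast, QuaternionAlgebra.re_natCast, QuaternionAlgebra.imI_natCast, QuaternionAlgebra.imJ_natCast, QuaternionAlgebra.imK_natCast, QuaternionAlgebra.re_coe, QuaternionAlgebra.imI_coe,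 QuaternionAlgebra.imJ_coe, QuaternionAlgebra.imK_coe]
      push_cast
      try simp only [hA', hB', hC', hm']
      field_simp
      try ring
  have M33 : e 3 * e 3 = (-(p:ℤ)*(q:ℤ)*(p:ℤ)^(2*n)) • e 0 := by
    simp only [h0, h1, h2, h3]
    apply QuaternionAlgebra.ext <;>
    · simp only [QuaternionAlgebra.re_mul, QuaternionAlgebra.imI_mul, QuaternionAlgebra.imJ_mul, QuaternionAlgebra.imK_mul, QuaternionAlgebra.re_add, QuaternionAlgebra.imI_add, QuaternionAlgebra.imJ_add, QuaternionAlgebra.imK_add, QuaternionAlgebra.re_smul, QuaternionAlgebra.imI_smul, QuaternionAlgebra.imJ_smul, QuaternionAlgebra.imK_smul, QuaternionAlgebra.re_one, QuaternionAlgebra.imI_one, QuaternionAlgebra.imJ_one, QuaternionAlgebra.imK_one, zsmul_eq_mul, smul_eq_mul, QuaternionAlgebra.re_intCast, QuaternionAlgebra.imI_intCast, QuaternionAlgebra.imJ_intCast, QuaternionAlgebra.imK_intCast, QuaternionAlgebra.re_natCast, QuaternionAlgebra.imI_natCast, QuaternionAlgebra.imJ_natCast, QuaternionAlgebra.imK_natCast,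 QuaternionAlgebra.re_coe, QuaternionAlgebra.imI_coe, QuaternionAlgebra.imJ_coe, QuaternionAlgebra.imK_coe]
      push_cast
      try simp only [hA', hB', hC', hm']
      field_simp
      try ring
  have key : ∀ s t : Fin 4, e s * e t ∈ S := by
    have k00 : e 0 * e 0 ∈ S := by nth_rewrite 1 [h0]; rw [one_mul]; exact hmem 0
    have k01 : e 0 * e 1 ∈ S := by rw [h0, one_mul]; exact hmem 1
    have k02 : e 0 * e 2 ∈ S := by rw [h0, one_mul]; exact hmem 2
    have k03 : e 0 * e 3 ∈ S := by rw [h0, one_mul]; exact hmem 3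
    have k10 : e 1 * e 0 ∈ S := by rw [h0, mul_one]; exact hmem 1
    have k20 : e 2 * e 0 ∈ S := by rw [h0, mul_one]; exact hmem 2
    have k30 : e 3 * e 0 ∈ S := by rw [h0, mul_one]; exact hmem 3
    have k11 : e 1 * e 1 ∈ S := by
      rw [M11]; exact S.add_mem (hmem 1) (S.smul_mem _ (hmem 0))
    have k12 : e 1 * e 2 ∈ S := by
      rw [M12]; exact S.add_mem (S.smul_mem _ (hmem 2)) (S.smul_mem _ (hmem 3))
    have k21 : e 2 * e 1 ∈ S := by
      rw [M21]; exact S.add_mem (S.smul_mem _ (hmem 2)) (S.smul_mem _ (hmem 3))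
    have k13 : e 1 * e 3 ∈ S := by
      rw [M13]; exact S.add_mem (S.smul_mem _ (hmem 2)) (S.smul_mem _ (hmem 3))
    have k31 : e 3 * e 1 ∈ S := by
      rw [M31]; exact S.add_mem (S.smul_mem _ (hmem 2)) (S.smul_mem _ (hmem 3))
    have k22 : e 2 * e 2 ∈ S := by rw [M22]; exact S.smul_mem _ (hmem 0)
    have k23 : e 2 * e 3 ∈ S := by
      rw [M23]; exact S.add_mem (S.smul_mem _ (hmem 1)) (S.smul_mem _ (hmem 0))
    have k32 : e 3 * e 2 ∈ S := by
      rw [M32]; exact S.add_mem (S.smul_mem _ (hmem 1)) (S.smul_mem _ (hmem 0))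
    have k33 : e 3 * e 3 ∈ S := by rw [M33]; exact S.smul_mem _ (hmem 0)
    intro s t
    fin_cases s <;> fin_cases t <;> assumption
  refine ⟨?_, ?_, ?_, ?_⟩
  · rw [← h0]; exact hmem 0
  · intro a ha b hb
    have hSS : S * S ≤ S := by
      rw [hS, Submodule.span_mul_span]
      refine Submodule.span_le.mpr ?_
      rintro z ⟨a', ⟨s, rfl⟩, b', ⟨t, rfl⟩, rfl⟩
      exact key s t
    exact hSS (Submodule.mul_mem_mul ha hb)
  · rw [Fintype.linearIndependent_iff]
    intro g hg
    rw [Fin.sum_univ_four, h0, h1, h2, h3] at hg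
    have hre := congrArg QuaternionAlgebra.re hg
    have hI := congrArg QuaternionAlgebra.imI hg
    have hJ := congrArg QuaternionAlgebra.imJ hg
    have hK := congrArg QuaternionAlgebra.imK hg
    simp only [QuaternionAlgebra.re_add, QuaternionAlgebra.imI_add,
      QuaternionAlgebra.imJ_add, QuaternionAlgebra.imK_add,
      QuaternionAlgebra.re_smul, QuaternionAlgebra.imI_smul,
      QuaternionAlgebra.imJ_smul, QuaternionAlgebra.imK_smul,
      QuaternionAlgebra.re_one, QuaternionAlgebra.imI_one,
      QuaternionAlgebra.imJ_one, QuaternionAlgebra.imK_one,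
      QuaternionAlgebra.re_zero, QuaternionAlgebra.imI_zero,
      QuaternionAlgebra.imJ_zero, QuaternionAlgebra.imK_zero,
      smul_eq_mul, mul_zero, add_zero, zero_add, mul_one] at hre hI hJ hK
    have hPq : (p:ℚ)^n / (2*q) ≠ 0 := by positivity
    have hg1 : g 1 = 0 := by
      have h2 : g 1 * (1/2) = 0 := by linarith
      simpa using h2
    have hg0 : g 0 = 0 := by rw [hg1] at hre; linarith
    have hg2 : g 2 = 0 := by
      rcases mul_eq_zero.mp hJ with h | h
      · exact h
      · exact absurd h hPq
    have hg3 : g 3 = 0 := by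
      rw [hg2] at hK
      simp only [zero_mul, zero_add] at hK
      exact (mul_eq_zero.mp hK).resolve_right (pow_ne_zero _ hp0)
    intro i
    fin_cases i <;> assumption
  · have g0 : ∀ (h : 0 < 4), e ⟨0, h⟩ = 1 := fun _ => h0
    have g1 : ∀ (h : 1 < 4), e ⟨1, h⟩ = (⟨1/2, 1/2, 0, 0⟩ : ℍ[ℚ, -(p : ℚ), -(q : ℚ)]) := fun _ => h1
    have g2 : ∀ (h : 2 < 4), e ⟨2, h⟩ = (⟨0, 0, (p : ℚ) ^ n / (2 * q), (p : ℚ) ^ n * (u : ℚ) / (2 * q)⟩ : ℍ[ℚ, -(p : ℚ), -(q : ℚ)]) := fun _ => h2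
    have g3 : ∀ (h : 3 < 4), e ⟨3, h⟩ = (⟨0, 0, 0, (p : ℚ) ^ n⟩ : ℍ[ℚ, -(p : ℚ), -(q : ℚ)]) := fun _ => h3
    have hM : (Matrix.of fun s t : Fin 4 => (e s * e t + star (e s * e t)).re)
        = !![2, 1, 0, 0;
             1, (1-(p:ℚ))/2, 0, 0;
             0, 0, -((p:ℚ)^n)^2*(1+(u:ℚ)^2*p)/(2*q), -((p:ℚ)^n)^2*(u:ℚ)*p;
             0, 0, -((p:ℚ)^n)^2*(u:ℚ)*p, -2*(p:ℚ)*q*((p:ℚ)^n)^2] := by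
      ext s t
      fin_cases s <;> fin_cases t <;>
      · simp only [Matrix.of_apply, h0, h1, h2, h3, g0, g1, g2, g3, QuaternionAlgebra.re_add,
          QuaternionAlgebra.re_star, QuaternionAlgebra.re_mul,
          QuaternionAlgebra.re_one, QuaternionAlgebra.imI_one,
          QuaternionAlgebra.imJ_one, QuaternionAlgebra.imK_one,
          Matrix.cons_val', Matrix.cons_val_zero, Matrix.cons_val_one,
          Matrix.head_cons, Matrix.empty_val', Matrix.cons_val_fin_one,
          Matrix.head_fin_const, Fin.zero_eta, Fin.mk_one, Fin.isValue, Matrix.cons_val,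
          Matrix.cons_val_succ']
        field_simp
        try ring
    rw [hM]
    have hdet : (!![2, 1, 0, 0;
             1, (1-(p:ℚ))/2, 0, 0;
             0, 0, -((p:ℚ)^n)^2*(1+(u:ℚ)^2*p)/(2*q), -((p:ℚ)^n)^2*(u:ℚ)*p;
             0, 0, -((p:ℚ)^n)^2*(u:ℚ)*p, -2*(p:ℚ)*q*((p:ℚ)^n)^2] : Matrix (Fin 4) (Fin 4) ℚ).det
        = -((p:ℚ) ^ (2*(2*n+1))) := by
      simp [Matrix.det_succ_row_zero, Fin.sum_univ_succ,
        show ((1:Fin 4).succAbove 2) = 3 from rfl]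
      field_simp
      ring
    rw [hdet, abs_neg, abs_of_nonneg (by positivity)]
end

section
/- Let p and q be primes with p ≡ 3 (mod 4), q ≡ 1 (mod 8), and (q|p) = 1. Let n ≥ 1 and r = 2n. In B = ℍ[ℚ, −p, −q], choose an integer x with x² ≡ −p (mod q), integers v, w with v·q + w·(2x) = 1, and an integer u with 0 ≤ u < 2q and u ≡ v·q + 2·w (mod 2q). Set e₁ = 1, e₂ = (1 + i)/2, e₃ = pⁿ·(j + u·k)/(2q), e₄ = p^{n−1}·k in B (this is the basis of the general theorem with f = p^{n−1}, g = 1, h = p). Then the ℤ-submodule S of B spanned by e₁, e₂, e₃, e₄ satisfies: (i) 1 ∈ S; (ii) S is closed under multiplication; (iii) e₁, e₂, e₃, e₄ are linearly independent over ℚ; and (iv) the 4×4 rational matrix M with entries M(s,t) = trd(e_s·e_t) has |det M| = p^{4n}. That is, S is an order of level N = p^r = p^{2n} in the definite quaternion algebra of discriminant p. -/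
open Quaternion

theorem det_fin_four' {R : Type*} [CommRing R] (A : Matrix (Fin 4) (Fin 4) R) :
    A.det =
      A 0 0 * (A 1 1 * A 2 2 * A 3 3 - A 1 1 * A 2 3 * A 3 2 - A 1 2 * A 2 1 * A 3 3
        + A 1 2 * A 2 3 * A 3 1 + A 1 3 * A 2 1 * A 3 2 - A 1 3 * A 2 2 * A 3 1)
      - A 0 1 * (A 1 0 * A 2 2 * A 3 3 - A 1 0 * A 2 3 * A 3 2 - A 1 2 * A 2 0 * A 3 3
        + A 1 2 * A 2 3 * A 3 0 + A 1 3 * A 2 0 * A 3 2 - A 1 3 * A 2 2 * A 3 0)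
      + A 0 2 * (A 1 0 * A 2 1 * A 3 3 - A 1 0 * A 2 3 * A 3 1 - A 1 1 * A 2 0 * A 3 3
        + A 1 1 * A 2 3 * A 3 0 + A 1 3 * A 2 0 * A 3 1 - A 1 3 * A 2 1 * A 3 0)
      - A 0 3 * (A 1 0 * A 2 1 * A 3 2 - A 1 0 * A 2 2 * A 3 1 - A 1 1 * A 2 0 * A 3 2
        + A 1 1 * A 2 2 * A 3 0 + A 1 2 * A 2 0 * A 3 1 - A 1 2 * A 2 1 * A 3 0) := by
  rw [Matrix.det_succ_row_zero, Fin.sum_univ_four]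
  simp [Matrix.det_fin_three, Matrix.submatrix_apply, Fin.succAbove, Fin.lt_def]
  norm_num [Fin.succ, show ((⟨3, by norm_num⟩ : Fin 4)) = 3 from rfl,
    show (((3 : Fin 4)) : ℕ) = 3 from rfl, show Fin.castSucc (2 : Fin 3) = 2 from rfl]
  try ring

set_option maxHeartbeats 4000000 in
/-- For primes `p ≡ 3 (mod 4)`, `q ≡ 1 (mod 8)`, `(q|p) = 1`, and `n ≥ 1`, the
ℤ-span of `1`, `(1+i)/2`, `pⁿ(j + u·k)/(2q)`, `p^(n-1)·k` in `ℍ[ℚ, -p, -q]` is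
an order of level `p^(2n)`. -/
theorem order_level_p_even_power_p3mod4
    (p q : ℕ) [Fact p.Prime] [Fact q.Prime]
    (hp4 : p % 4 = 3) (hq8 : q % 8 = 1) (hleg : legendreSym p q = 1)
    (n : ℕ) (hn : 1 ≤ n) (x v w u : ℤ)
    (hx : x ^ 2 ≡ -(p : ℤ) [ZMOD (q : ℤ)])
    (hvw : v * (q : ℤ) + w * (2 * x) = 1)
    (hu0 : 0 ≤ u) (hult : u < 2 * (q : ℤ))
    (hu : u ≡ v * (q : ℤ) + 2 * w [ZMOD 2 * (q : ℤ)])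
    (e : Fin 4 → ℍ[ℚ, -(p : ℚ), -(q : ℚ)])
    (he : e = ![1,
                ⟨1 / 2, 1 / 2, 0, 0⟩,
                ⟨0, 0, (p : ℚ) ^ n / (2 * q), (p : ℚ) ^ n * (u : ℚ) / (2 * q)⟩,
                ⟨0, 0, 0, (p : ℚ) ^ (n - 1)⟩])
    (S : Submodule ℤ ℍ[ℚ, -(p : ℚ), -(q : ℚ)])
    (hS : S = Submodule.span ℤ (Set.range e)) :
    (1 : ℍ[ℚ, -(p : ℚ), -(q : ℚ)]) ∈ S ∧
    (∀ u' ∈ S, ∀ v' ∈ S, u' * v' ∈ S) ∧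
    LinearIndependent ℚ e ∧
    |(Matrix.of fun s t : Fin 4 => (e s * e t + star (e s * e t)).re).det| =
      (p : ℚ) ^ (4 * n) := by
  obtain ⟨m, rfl⟩ : ∃ m, n = m + 1 := ⟨n - 1, (Nat.succ_pred_eq_of_pos hn).symm⟩
  subst hS
  have hq2 : (2 : ℕ) ≤ q := (Fact.out (p := q.Prime)).two_le
  have hp2 : (2 : ℕ) ≤ p := (Fact.out (p := p.Prime)).two_le
  have hq0 : (q : ℚ) ≠ 0 := Nat.cast_ne_zero.2 (by omega)
  have hp0 : (p : ℚ) ≠ 0 := Nat.cast_ne_zero.2 (by omega)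
  -- integer arithmetic
  obtain ⟨c, hc⟩ : ∃ c : ℤ, (p : ℤ) + 1 = 4 * c := ⟨((p : ℤ) + 1) / 4, by omega⟩
  obtain ⟨d0, hd0⟩ : ∃ d0 : ℤ, v * (q : ℤ) + 2 * w - u = 2 * d0 := by
    have h := (hu.of_dvd ⟨(q : ℤ), rfl⟩).dvd
    obtain ⟨d0, hd0⟩ := h
    exact ⟨d0, by linarith⟩
  obtain ⟨s, hs⟩ : ∃ s : ℤ, u = 2 * s + 1 :=
    ⟨w - w * x - d0, by linear_combination hvw - hd0⟩
  obtain ⟨d1, hd1⟩ : ∃ d1 : ℤ, v * (q : ℤ) + 2 * w - u = (q : ℤ) * d1 := by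
    have h := (hu.of_dvd ⟨2, mul_comm 2 (q : ℤ)⟩).dvd
    obtain ⟨d1, hd1⟩ := h
    exact ⟨d1, by linarith⟩
  obtain ⟨d2, hd2⟩ : ∃ d2 : ℤ, -(p : ℤ) - x ^ 2 = (q : ℤ) * d2 := hx.dvd
  have hY : 1 - u * x = (q : ℤ) * (v - v * x + d1 * x) := by
    linear_combination x * hd1 - hvw
  have hqdvd : (q : ℤ) ∣ 1 + u ^ 2 * (p : ℤ) :=
    ⟨(1 + u * x) * (v - v * x + d1 * x) - u ^ 2 * d2, by
      linear_combination (1 + u * x) * hY - u ^ 2 * hd2⟩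
  have h4dvd : (4 : ℤ) ∣ 1 + u ^ 2 * (p : ℤ) :=
    ⟨4 * s ^ 2 * c + 4 * s * c + c - s ^ 2 - s, by
      linear_combination u ^ 2 * hc + (4 * c - 1) * (u + 2 * s + 1) * hs⟩
  obtain ⟨c4, hc4⟩ := h4dvd
  have hqprime : Prime (q : ℤ) := Nat.prime_iff_prime_int.mp (Fact.out)
  have hq4 : ¬ ((q : ℤ) ∣ 4) := by
    intro h
    have := Int.le_of_dvd (by norm_num) h
    omega
  obtain ⟨t, ht0⟩ : (q : ℤ) ∣ c4 := by
    rcases hqprime.dvd_mul.mp (hc4 ▸ hqdvd) with h | h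
    · exact absurd h hq4
    · exact h
  have ht : 1 + u ^ 2 * (p : ℤ) = 4 * ((q : ℤ) * t) := by rw [hc4, ht0]
  obtain ⟨aa, haa⟩ : ∃ aa : ℤ, 1 - u * (p : ℤ) = 2 * aa :=
    ⟨1 - 4 * s * c + s - 2 * c, by
      linear_combination (-u) * hc + (1 - 4 * c) * hs⟩
  obtain ⟨bb, hbb⟩ : ∃ bb : ℤ, 1 + u * (p : ℤ) = 2 * bb :=
    ⟨4 * s * c - s + 2 * c, by
      linear_combination u * hc + (4 * c - 1) * hs⟩
  -- rational versions (solved forms)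
  have hcv : (c : ℚ) = ((p : ℚ) + 1) / 4 := by
    have : ((p : ℚ) + 1) = 4 * (c : ℚ) := by exact_mod_cast hc
    linarith
  have htv : (t : ℚ) = (1 + (u : ℚ) ^ 2 * p) / (4 * q) := by
    have h : (1 : ℚ) + (u : ℚ) ^ 2 * p = 4 * ((q : ℚ) * t) := by exact_mod_cast ht
    field_simp
    linarith
  have hav : (aa : ℚ) = (1 - (u : ℚ) * p) / 2 := by
    have : (1 : ℚ) - (u : ℚ) * p = 2 * (aa : ℚ) := by exact_mod_cast haa
    linarith
  have hbv : (bb : ℚ) = (1 + (u : ℚ) * p) / 2 := by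
    have : (1 : ℚ) + (u : ℚ) * p = 2 * (bb : ℚ) := by exact_mod_cast hbb
    linarith
  -- basis values
  have he0 : e 0 = 1 := by rw [he]; rfl
  have he1 : e 1 = ⟨1 / 2, 1 / 2, 0, 0⟩ := by rw [he]; rfl
  have he2 : e 2 = ⟨0, 0, (p : ℚ) ^ (m + 1) / (2 * q),
      (p : ℚ) ^ (m + 1) * (u : ℚ) / (2 * q)⟩ := by rw [he]; rfl
  have he3 : e 3 = ⟨0, 0, 0, (p : ℚ) ^ (m + 1 - 1)⟩ := by rw [he]; rfl
  have he3' : e 3 = ⟨0, 0, 0, (p : ℚ) ^ m⟩ := by rw [he3]; norm_num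
  -- span membership helper
  have hsp : ∀ z0 z1 z2 z3 : ℤ,
      z0 • e 0 + z1 • e 1 + z2 • e 2 + z3 • e 3 ∈ Submodule.span ℤ (Set.range e) :=
    fun z0 z1 z2 z3 =>
    add_mem (add_mem (add_mem
      (Submodule.smul_mem _ _ (Submodule.subset_span ⟨0, rfl⟩))
      (Submodule.smul_mem _ _ (Submodule.subset_span ⟨1, rfl⟩)))
      (Submodule.smul_mem _ _ (Submodule.subset_span ⟨2, rfl⟩)))
      (Submodule.smul_mem _ _ (Submodule.subset_span ⟨3, rfl⟩))
  have key : ∀ i j : Fin 4, e i * e j ∈ Submodule.span ℤ (Set.range e) := by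
    have z0 : ∀ j : Fin 4, e 0 * e j ∈ Submodule.span ℤ (Set.range e) := fun j => by
      rw [he0, one_mul]; exact Submodule.subset_span ⟨j, rfl⟩
    have z0' : ∀ j : Fin 4, e j * e 0 ∈ Submodule.span ℤ (Set.range e) := fun j => by
      rw [he0, mul_one]; exact Submodule.subset_span ⟨j, rfl⟩
    intro i j
    fin_cases i <;> fin_cases j
    · exact z0 0
    · exact z0 1
    · exact z0 2
    · exact z0 3
    · exact z0' 1
    · -- e1 * e1
      show e 1 * e 1 ∈ _
      have : e 1 * e 1 = (-c) • e 0 + (1 : ℤ) • e 1 + (0 : ℤ) • e 2 + (0 : ℤ) • e 3 := by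
        rw [he0, he1, he2, he3']
        simp only [← Int.cast_smul_eq_zsmul ℚ]
        ext <;> simp [hcv] <;> (try field_simp) <;> (try ring)
      rw [this]; exact hsp _ _ _ _
    · -- e1 * e2
      show e 1 * e 2 ∈ _
      have : e 1 * e 2 = (0 : ℤ) • e 0 + (0 : ℤ) • e 1 + aa • e 2 + ((p : ℤ) * t) • e 3 := by
        rw [he0, he1, he2, he3']
        simp only [← Int.cast_smul_eq_zsmul ℚ]
        ext <;> simp [hav, htv] <;> (try field_simp) <;> (try ring)
      rw [this]; exact hsp _ _ _ _
    · -- e1 * e3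
      show e 1 * e 3 ∈ _
      have : e 1 * e 3 = (0 : ℤ) • e 0 + (0 : ℤ) • e 1 + (-(q : ℤ)) • e 2 + bb • e 3 := by
        rw [he0, he1, he2, he3']
        simp only [← Int.cast_smul_eq_zsmul ℚ]
        ext <;> simp [hbv] <;> (try field_simp) <;> (try ring)
      rw [this]; exact hsp _ _ _ _
    · exact z0' 2
    · -- e2 * e1
      show e 2 * e 1 ∈ _
      have : e 2 * e 1 = (0 : ℤ) • e 0 + (0 : ℤ) • e 1 + bb • e 2 + (-((p : ℤ) * t)) • e 3 := by
        rw [he0, he1, he2, he3']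
        simp only [← Int.cast_smul_eq_zsmul ℚ]
        ext <;> simp [hbv, htv] <;> (try field_simp) <;> (try ring)
      rw [this]; exact hsp _ _ _ _
    · -- e2 * e2
      show e 2 * e 2 ∈ _
      have : e 2 * e 2 = (-((p : ℤ) ^ (2 * m + 2) * t)) • e 0 + (0 : ℤ) • e 1 +
          (0 : ℤ) • e 2 + (0 : ℤ) • e 3 := by
        rw [he0, he1, he2, he3']
        simp only [← Int.cast_smul_eq_zsmul ℚ]
        ext <;> simp [htv] <;> (try field_simp) <;> (try ring)
      rw [this]; exact hsp _ _ _ _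
    · -- e2 * e3
      show e 2 * e 3 ∈ _
      have : e 2 * e 3 = (-((p : ℤ) ^ (2 * m + 1) * bb)) • e 0 +
          ((p : ℤ) ^ (2 * m + 1)) • e 1 + (0 : ℤ) • e 2 + (0 : ℤ) • e 3 := by
        rw [he0, he1, he2, he3']
        simp only [← Int.cast_smul_eq_zsmul ℚ]
        ext <;> simp [hbv] <;> (try field_simp) <;> (try ring)
      rw [this]; exact hsp _ _ _ _
    · exact z0' 3
    · -- e3 * e1
      show e 3 * e 1 ∈ _
      have : e 3 * e 1 = (0 : ℤ) • e 0 + (0 : ℤ) • e 1 + (q : ℤ) • e 2 + aa • e 3 := by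
        rw [he0, he1, he2, he3']
        simp only [← Int.cast_smul_eq_zsmul ℚ]
        ext <;> simp [hav] <;> (try field_simp) <;> (try ring)
      rw [this]; exact hsp _ _ _ _
    · -- e3 * e2
      show e 3 * e 2 ∈ _
      have : e 3 * e 2 = ((p : ℤ) ^ (2 * m + 1) * aa) • e 0 +
          (-((p : ℤ) ^ (2 * m + 1))) • e 1 + (0 : ℤ) • e 2 + (0 : ℤ) • e 3 := by
        rw [he0, he1, he2, he3']
        simp only [← Int.cast_smul_eq_zsmul ℚ]
        ext <;> simp [hav] <;> (try field_simp) <;> (try ring)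
      rw [this]; exact hsp _ _ _ _
    · -- e3 * e3
      show e 3 * e 3 ∈ _
      have : e 3 * e 3 = (-((p : ℤ) ^ (2 * m + 1) * (q : ℤ))) • e 0 + (0 : ℤ) • e 1 +
          (0 : ℤ) • e 2 + (0 : ℤ) • e 3 := by
        rw [he0, he1, he2, he3']
        simp only [← Int.cast_smul_eq_zsmul ℚ]
        ext <;> simp <;> (try field_simp) <;> (try ring)
      rw [this]; exact hsp _ _ _ _
  refine ⟨?_, ?_, ?_, ?_⟩
  · exact Submodule.subset_span ⟨0, he0⟩
  · -- multiplicative closure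
    intro a ha b hb
    have hle : Submodule.span ℤ (Set.range e) * Submodule.span ℤ (Set.range e) ≤
        Submodule.span ℤ (Set.range e) := by
      rw [Submodule.span_mul_span]
      refine Submodule.span_le.2 ?_
      rintro _ ⟨_, ⟨i, rfl⟩, _, ⟨j, rfl⟩, rfl⟩
      exact key i j
    exact hle (Submodule.mul_mem_mul ha hb)
  · -- linear independence
    rw [Fintype.linearIndependent_iff]
    intro g hg
    rw [Fin.sum_univ_four, he0, he1, he2, he3', QuaternionAlgebra.ext_iff] at hg
    simp only [QuaternionAlgebra.re_add, QuaternionAlgebra.imI_add, QuaternionAlgebra.imJ_add,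
      QuaternionAlgebra.imK_add, QuaternionAlgebra.re_smul, QuaternionAlgebra.imI_smul,
      QuaternionAlgebra.imJ_smul, QuaternionAlgebra.imK_smul, QuaternionAlgebra.re_one,
      QuaternionAlgebra.imI_one, QuaternionAlgebra.imJ_one, QuaternionAlgebra.imK_one,
      QuaternionAlgebra.re_zero, smul_eq_mul, mul_zero, mul_one, add_zero, zero_add,
      QuaternionAlgebra.imI_zero, QuaternionAlgebra.imJ_zero, QuaternionAlgebra.imK_zero] at hg
    obtain ⟨h1, h2, h3, h4⟩ := hg
    have hpm : (p : ℚ) ^ (m + 1) ≠ 0 := pow_ne_zero _ hp0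
    have hpm' : (p : ℚ) ^ m ≠ 0 := pow_ne_zero _ hp0
    have hg1 : g 1 = 0 := by
      field_simp at h2
      linarith
    have hg0 : g 0 = 0 := by
      rw [hg1] at h1
      linarith
    have hg2 : g 2 = 0 := by
      field_simp at h3
      exact (mul_eq_zero.mp (by rw [mul_zero] at h3; exact h3)).resolve_right hpm
    have hg3 : g 3 = 0 := by
      rw [hg2] at h4
      field_simp at h4
      exact (mul_eq_zero.mp ((mul_eq_zero.mp (show (2 * (q : ℚ)) * (g 3 * (p : ℚ) ^ m) = 0 by
        linear_combination h4)).resolve_left (mul_ne_zero two_ne_zero hq0))).resolve_right hpm'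
    intro i
    fin_cases i
    · exact hg0
    · exact hg1
    · exact hg2
    · exact hg3
  · -- determinant
    have hdet : (Matrix.of fun s t : Fin 4 => (e s * e t + star (e s * e t)).re).det =
        -((p : ℚ) ^ (4 * (m + 1))) := by
      rw [det_fin_four']
      simp only [Matrix.of_apply]
      rw [he0, he1, he2, he3']
      simp [QuaternionAlgebra.re_mul]
      field_simp
      ring
    rw [hdet, abs_neg, abs_of_nonneg (by positivity)]
end
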